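/- arXiv:0903.5316 — 12 statements merged into one kernel-verified Lean document; each statement's English description precedes it below -/
import Mathlib

section
/- The Thue–Morse sequence is cube-free: there is no nonempty finite word u and position i such that t[i..i+3|u|-1] = uuu. -/
/-- The word `u` occurs in the sequence `x` at position `i`. -/
def occursAt {A : Type*} (x : ℕ → A) (u : List A) (i : ℕ) : Prop :=
  ∀ j : Fin u.length, x (i + (j : ℕ)) = u.get j

open Fin.NatCast

/-- The Thue–Morse sequence: parity of the binary digit sum. -/
def thue (n : ℕ) : Fin 2 := ((Nat.digits 2 n).sum : Fin 2)

lemma thue_two_mul (m : ℕ) : thue (2*m) = thue m := by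
  rcases Nat.eq_zero_or_pos m with h | h
  · simp [h]
  · unfold thue
    rw [Nat.digits_def' (by norm_num) (by omega)]
    simp [Nat.mul_div_cancel_left, Nat.mul_mod_right]

lemma thue_two_mul_add_one (m : ℕ) : thue (2*m+1) = thue m + 1 := by
  unfold thue
  rw [Nat.digits_def' (by norm_num) (by omega)]
  have h1 : (2*m+1) % 2 = 1 := by omega
  have h2 : (2*m+1) / 2 = m := by omega
  rw [h1, h2]
  simp [List.sum_cons, add_comm]

/-- first difference sequence -/
def tdiff (j : ℕ) : Fin 2 := thue j + thue (j+1)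

lemma tdiff_even (k : ℕ) : tdiff (2*k) = 1 := by
  unfold tdiff
  rw [thue_two_mul, thue_two_mul_add_one]
  have : ∀ x : Fin 2, x + (x + 1) = 1 := by decide
  exact this _

lemma tdiff_odd (k : ℕ) : tdiff (2*k+1) = 1 + tdiff k := by
  unfold tdiff
  have h : 2*k+1+1 = 2*(k+1) := by ring
  rw [h, thue_two_mul_add_one, thue_two_mul]
  have : ∀ x y : Fin 2, x + 1 + y = 1 + (x + y) := by decide
  exact this _ _

lemma no_period (n : ℕ) (hn : 0 < n) (i : ℕ)
    (h : ∀ j, i ≤ j → j < i + 2*n → thue j = thue (j+n)) : False := by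
  induction n using Nat.strong_induction_on generalizing i with
  | _ n IH =>
  rcases Nat.even_or_odd n with ⟨m, hm⟩ | ⟨m, hm⟩
  · -- n = 2m, reduce
    have hm0 : 0 < m := by omega
    apply IH m (by omega) hm0 ((i+1)/2)
    intro k hk1 hk2
    have h1 : i ≤ 2*k := by omega
    have h2 : 2*k < i + 2*n := by omega
    have := h (2*k) h1 h2
    rw [hm] at this
    have e : 2*k + (m+m) = 2*(k+m) := by ring
    rw [e, thue_two_mul, thue_two_mul] at this
    exact this
  · -- n odd
    rcases Nat.eq_zero_or_pos m with hm0 | hm0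
    · -- n = 1
      subst hm0
      have hn1 : n = 1 := by omega
      subst hn1
      have e1 := h i (le_refl i) (by omega)
      have e2 := h (i+1) (by omega) (by omega)
      have hx : ∀ x : Fin 2, x + x ≠ 1 := by decide
      rcases Nat.even_or_odd i with ⟨r, hr⟩ | ⟨r, hr⟩
      · have := tdiff_even r
        rw [show 2*r = i by omega] at this
        unfold tdiff at this
        rw [e1] at this
        exact hx _ this
      · have := tdiff_even (r+1)
        rw [show 2*(r+1) = i+1 by omega] at this
        unfold tdiff at this
        rw [show i+1+1 = i+2 by ring, ← e2] at this
        exact hx _ this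
    · -- n = 2m+1, m ≥ 1
      have hd : ∀ j, i ≤ j → j + 1 < i + 2*n → tdiff j = tdiff (j+n) := by
        intro j hj1 hj2
        unfold tdiff
        rw [h j hj1 (by omega), h (j+1) (by omega) (by omega),
          show j+1+n = j+n+1 by omega]
      -- for odd a in the window, tdiff a = 1, hence tdiff ((a-1)/2) = 0
      have key : ∀ k, i ≤ 2*k+1 → 2*k+2 < i + 2*n → tdiff k = 0 := by
        intro k h1 h2
        have := hd (2*k+1) h1 h2
        have he : 2*k+1+n = 2*(k+m+1) := by omega
        rw [he, tdiff_even, tdiff_odd] at this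
        have : ∀ x : Fin 2, 1 + x = 1 → x = 0 := by decide
        exact this _ ‹1 + tdiff k = 1›
      set k := i/2 with hk
      have c1 : tdiff k = 0 := key k (by omega) (by omega)
      have c2 : tdiff (k+1) = 0 := key (k+1) (by omega) (by omega)
      rcases Nat.even_or_odd k with ⟨r, hr⟩ | ⟨r, hr⟩
      · have := tdiff_even r
        rw [show 2*r = k by omega] at this
        rw [c1] at this; exact absurd this (by decide)
      · have := tdiff_even (r+1)
        rw [show 2*(r+1) = k+1 by omega] at this
        rw [c2] at this; exact absurd this (by decide)

lemma get_triple {A : Type*} (u : List A) (k : ℕ)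
    (hk : k + u.length < (u++u++u).length) :
    (u++u++u).get ⟨k, by omega⟩ = (u++u++u).get ⟨k + u.length, hk⟩ := by
  set n := u.length with hn
  have hl : (u++u++u).length = n + n + n := by simp [hn]; ring
  simp only [List.get_eq_getElem]
  rcases lt_or_ge k n with h | h
  · rw [List.getElem_append_left (by simp; omega), List.getElem_append_left h,
      List.getElem_append_left (by simp; omega), List.getElem_append_right (by omega)]
    congr 1; omega
  · rw [List.getElem_append_left (by simp; omega), List.getElem_append_right h,
      List.getElem_append_right (by simp; omega)]
    congr 1; simp; omega

/-- The Thue–Morse sequence is cube-free. -/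
theorem thue_cubeFree :
    ¬ ∃ (u : List (Fin 2)) (i : ℕ), u ≠ [] ∧ occursAt thue (u ++ u ++ u) i := by
  rintro ⟨u, i, hu, hocc⟩
  set n := u.length with hn
  have hn0 : 0 < n := List.length_pos_iff.mpr hu
  have hl : (u++u++u).length = n + n + n := by simp [hn]; ring
  apply no_period n hn0 i
  intro j hj1 hj2
  obtain ⟨k, rfl⟩ : ∃ k, j = i + k := ⟨j - i, by omega⟩
  have hk : k < 2*n := by omega
  have hkl : (i + k) + n = i + (k + n) := by ring
  have h1 := hocc ⟨k, by omega⟩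
  have h2 := hocc ⟨k + n, by omega⟩
  rw [hkl, h1, h2]
  exact get_triple u k (by omega)
end

section
/- If for some n the subword complexity of a sequence x over a finite alphabet satisfies p_x(n) ≤ n, then x is eventually periodic. -/
/-- The subword complexity: the number of distinct length-`n` factors of `x`. -/
noncomputable def subwordComplexity {A : Type*} (x : ℕ → A) (n : ℕ) : ℕ :=
  Set.ncard {u : List A | u.length = n ∧ ∃ i, occursAt x u i}

/-- `x` is eventually periodic. -/
def EventuallyPeriodic {A : Type*} (x : ℕ → A) : Prop :=
  ∃ K T : ℕ, 1 ≤ T ∧ ∀ i : ℕ, K ≤ i → x (i + T) = x i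

/-- The length-`m` window of `x` starting at `i`. -/
def win {A : Type*} (x : ℕ → A) (m i : ℕ) : List A :=
  List.ofFn (fun r : Fin m => x (i + r))

lemma win_length {A : Type*} (x : ℕ → A) (m i : ℕ) : (win x m i).length = m := by
  simp [win]

lemma occursAt_win {A : Type*} (x : ℕ → A) (m i : ℕ) : occursAt x (win x m i) i := by
  intro j
  obtain ⟨j, hj⟩ := j
  simp [win, List.get_ofFn]

lemma factorSet_eq {A : Type*} (x : ℕ → A) (m : ℕ) :
    {u : List A | u.length = m ∧ ∃ i, occursAt x u i} = Set.range (fun i => win x m i) := by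
  ext u
  constructor
  · rintro ⟨hl, i, ho⟩
    refine ⟨i, ?_⟩
    symm
    apply List.ext_get (by simp [win_length, hl])
    intro k h1 h2
    simpa [win, List.get_ofFn] using (ho ⟨k, h1⟩).symm
  · rintro ⟨i, rfl⟩
    exact ⟨win_length x m i, i, occursAt_win x m i⟩

lemma win_range_finite {A : Type*} [Fintype A] (x : ℕ → A) (m : ℕ) :
    (Set.range (fun i => win x m i)).Finite := by
  have : Set.range (fun i => win x m i) ⊆
      (fun f : Fin m → A => List.ofFn f) '' Set.univ := by
    rintro u ⟨i, rfl⟩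
    exact ⟨fun r => x (i + r), Set.mem_univ _, rfl⟩
  exact (Set.finite_univ.image _).subset this

lemma subwordComplexity_eq {A : Type*} (x : ℕ → A) (m : ℕ) :
    subwordComplexity x m = (Set.range (fun i => win x m i)).ncard := by
  rw [subwordComplexity, factorSet_eq]

lemma win_succ {A : Type*} (x : ℕ → A) (m i : ℕ) :
    win x (m + 1) i = (win x m i).concat (x (i + m)) := by
  rw [win, List.ofFn_succ']
  rfl

/-- If the number of length-(m+1) windows is at most the number of length-m windows,
then a window determines the next letter. -/
lemma next_letter {A : Type*} [Fintype A] (x : ℕ → A) (m : ℕ)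
    (hc : (Set.range (fun i => win x (m + 1) i)).ncard ≤
      (Set.range (fun i => win x m i)).ncard)
    {i j : ℕ} (hw : win x m i = win x m j) : x (i + m) = x (j + m) := by
  set s := Set.range (fun i => win x (m + 1) i) with hs
  set t := Set.range (fun i => win x m i) with ht
  have hmaps : ∀ u (_ : u ∈ s), u.dropLast ∈ t := by
    rintro u ⟨k, rfl⟩
    refine ⟨k, ?_⟩
    show win x m k = (win x (m + 1) k).dropLast
    simp [win_succ]
  have hsurj : ∀ v ∈ t, ∃ u hu, (fun (u : List A) (_ : u ∈ s) => u.dropLast) u hu = v := by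
    rintro v ⟨k, rfl⟩
    refine ⟨win x (m + 1) k, ⟨k, rfl⟩, ?_⟩
    show (win x (m + 1) k).dropLast = win x m k
    simp [win_succ]
  have hinj := Set.inj_on_of_surj_on_of_ncard_le
    (s := s) (t := t) (fun u _ => u.dropLast) hmaps hsurj hc
  have h1 : win x (m + 1) i = win x (m + 1) j := by
    apply hinj ⟨i, rfl⟩ ⟨j, rfl⟩ ?_ (win_range_finite x (m + 1))
    show (win x (m + 1) i).dropLast = (win x (m + 1) j).dropLast
    simp [win_succ, hw]
  have h2 := List.ofFn_injective h1
  have := congrFun h2 (Fin.last m)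
  simpa using this

lemma propagate {A : Type*} [Fintype A] (x : ℕ → A) (m : ℕ)
    (hc : (Set.range (fun i => win x (m + 1) i)).ncard ≤
      (Set.range (fun i => win x m i)).ncard)
    {i j : ℕ} (hw : win x m i = win x m j) :
    ∀ k, win x m (i + k) = win x m (j + k) ∧ x (i + k + m) = x (j + k + m) := by
  intro k
  induction k with
  | zero => exact ⟨by simpa using hw, by simpa using next_letter x m hc hw⟩
  | succ k ih =>
    obtain ⟨hwk, hxk⟩ := ih
    have hent : ∀ r : Fin m, x (i + k + r) = x (j + k + r) := by
      intro r
      have := congrFun (List.ofFn_injective hwk) r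
      simpa using this
    have hnext : win x m (i + (k + 1)) = win x m (j + (k + 1)) := by
      rw [win, win]
      congr 1
      funext r
      rcases lt_or_eq_of_le (Nat.succ_le_of_lt r.isLt) with hr | hr
      · have e1 : i + (k + 1) + (r : ℕ) = i + k + ((r : ℕ) + 1) := by omega
        have e2 : j + (k + 1) + (r : ℕ) = j + k + ((r : ℕ) + 1) := by omega
        rw [e1, e2]
        exact hent ⟨(r : ℕ) + 1, hr⟩
      · have e1 : i + (k + 1) + (r : ℕ) = i + k + m := by omega
        have e2 : j + (k + 1) + (r : ℕ) = j + k + m := by omega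
        rw [e1, e2]
        exact hxk
    exact ⟨hnext, next_letter x m hc hnext⟩

/-- If `p_x(n) ≤ n` for some `n`, then `x` is eventually periodic. -/
theorem eventuallyPeriodic_of_subwordComplexity_le {A : Type*} [Fintype A]
    (x : ℕ → A) (n : ℕ) (h : subwordComplexity x n ≤ n) :
    EventuallyPeriodic x := by
  -- there is m < n with p(m+1) ≤ p(m)
  have hp0 : 1 ≤ subwordComplexity x 0 := by
    rw [subwordComplexity_eq]
    have : (Set.range (fun i => win x 0 i)).Nonempty := ⟨win x 0 0, 0, rfl⟩
    exact (Set.ncard_pos (win_range_finite x 0)).mpr this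
  have hm : ∃ m, m < n ∧ subwordComplexity x (m + 1) ≤ subwordComplexity x m := by
    by_contra hcon
    push_neg at hcon
    have key : ∀ m ≤ n, m + 1 ≤ subwordComplexity x m := by
      intro m
      induction m with
      | zero => intro _; exact hp0
      | succ m ih =>
        intro hmn
        have h1 := ih (by omega)
        have h2 := hcon m (by omega)
        omega
    have := key n le_rfl
    omega
  obtain ⟨m, _, hle⟩ := hm
  rw [subwordComplexity_eq, subwordComplexity_eq] at hle
  -- pigeonhole: two equal windows
  have hfin := win_range_finite x m
  haveI : Finite (Set.range (fun i => win x m i)) := hfin.to_subtype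
  obtain ⟨i, j, hne, heq⟩ := Finite.exists_ne_map_eq_of_infinite
    (fun i : ℕ => (⟨win x m i, ⟨i, rfl⟩⟩ : Set.range (fun i => win x m i)))
  have heq' : win x m i = win x m j := congrArg Subtype.val heq
  -- WLOG i < j
  rcases Nat.lt_or_ge i j with hij | hij
  · refine ⟨i + m, j - i, by omega, fun t ht => ?_⟩
    have := (propagate x m hle heq' (t - i - m)).2
    have e1 : i + (t - i - m) + m = t := by omega
    have e2 : j + (t - i - m) + m = t + (j - i) := by omega
    rw [e1, e2] at this
    exact this.symm
  · have hij' : j < i := by omega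
    refine ⟨j + m, i - j, by omega, fun t ht => ?_⟩
    have := (propagate x m hle heq'.symm (t - j - m)).2
    have e1 : j + (t - j - m) + m = t := by omega
    have e2 : i + (t - j - m) + m = t + (i - j) := by omega
    rw [e1, e2] at this
    exact this.symm
end

section
/- For every sequence y over a finite alphabet there exists an almost periodic sequence x such that every factor of x is a factor of y. -/
/-- A sequence is almost periodic (uniformly recurrent) if every factor
occurs in every sufficiently long window. -/
def AlmostPeriodic {A : Type*} (x : ℕ → A) : Prop :=
  ∀ u : List A, (∃ i, occursAt x u i) →
    ∃ l : ℕ, ∀ i : ℕ, ∃ j : ℕ, i ≤ j ∧ j + u.length ≤ i + l ∧ occursAt x u j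

namespace APaux
variable {A : Type*}

def sh (z : ℕ → A) : ℕ → A := fun n => z (n + 1)

lemma sh_iterate (z : ℕ → A) (k n : ℕ) : (sh^[k] z) n = z (n + k) := by
  induction k generalizing z n with
  | zero => rfl
  | succ k ih =>
    rw [Function.iterate_succ_apply, ih]
    rfl

lemma occursAt_iterate (z : ℕ → A) (u : List A) (k i : ℕ) :
    occursAt (sh^[k] z) u i ↔ occursAt z u (i + k) := by
  unfold occursAt
  constructor <;> intro h j <;> have := h j <;>
    simpa [sh_iterate, Nat.add_right_comm] using this

section Top
variable [TopologicalSpace A] [DiscreteTopology A]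

lemma continuous_sh : Continuous (sh : (ℕ → A) → (ℕ → A)) :=
  continuous_pi fun n => continuous_apply (n + 1)

lemma isClopen_cyl (u : List A) (i : ℕ) :
    IsClopen {z : ℕ → A | occursAt z u i} := by
  have : {z : ℕ → A | occursAt z u i} =
      ⋂ j : Fin u.length, (fun z : ℕ → A => z (i + (j : ℕ))) ⁻¹' {u.get j} := by
    ext z; simp [occursAt, Set.mem_iInter]
  rw [this]
  refine ⟨?_, ?_⟩
  · exact isClosed_iInter fun j =>
      IsClosed.preimage (continuous_apply _) isClosed_singleton
  · exact isOpen_iInter_of_finite fun j =>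
      IsOpen.preimage (continuous_apply _) (isOpen_discrete _)

end Top
end APaux

open APaux

/-- For every sequence `y` there is an almost periodic sequence `x` all of whose
factors are factors of `y`. -/
theorem exists_almostPeriodic_subFactors {A : Type*} [Fintype A] (y : ℕ → A) :
    ∃ x : ℕ → A, AlmostPeriodic x ∧
      ∀ u : List A, (∃ i, occursAt x u i) → ∃ i, occursAt y u i := by
  classical
  letI : TopologicalSpace A := ⊥
  haveI : DiscreteTopology A := ⟨rfl⟩
  set X₀ : Set (ℕ → A) := closure (Set.range fun n => sh^[n] y) with hX₀
  have hX₀inv : ∀ z ∈ X₀, sh z ∈ X₀ := by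
    intro z hz
    have h2 : sh '' X₀ ⊆ closure (sh '' Set.range fun n => sh^[n] y) := by
      rw [hX₀]; exact image_closure_subset_closure_image continuous_sh
    have h3 : (sh '' Set.range fun n => sh^[n] y) ⊆ Set.range fun n => sh^[n] y := by
      rintro _ ⟨_, ⟨n, rfl⟩, rfl⟩
      exact ⟨n + 1, Function.iterate_succ_apply' sh n y⟩
    rw [hX₀]
    exact closure_mono h3 (h2 (Set.mem_image_of_mem _ hz))
  set S : Set (Set (ℕ → A)) :=
    {X | X.Nonempty ∧ IsClosed X ∧ (∀ z ∈ X, sh z ∈ X) ∧ X ⊆ X₀} with hS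
  have hX₀S : X₀ ∈ S := by
    refine ⟨⟨y, ?_⟩, by rw [hX₀]; exact isClosed_closure, hX₀inv, subset_rfl⟩
    rw [hX₀]; exact subset_closure ⟨0, rfl⟩
  have hchainH : ∀ c ⊆ S, IsChain (· ⊆ ·) c → c.Nonempty →
      ∃ lb ∈ S, ∀ s ∈ c, lb ⊆ s := by
    rintro c hcS hchain ⟨X₁, hX₁c⟩
    refine ⟨⋂₀ c, ⟨?_, ?_, ?_, ?_⟩, fun s hs => Set.sInter_subset_of_mem hs⟩
    · haveI : Nonempty c := ⟨⟨X₁, hX₁c⟩⟩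
      have hdir : Directed (· ⊇ ·) (fun X : c => (X : Set (ℕ → A))) := by
        intro a b
        rcases hchain.total a.2 b.2 with h | h
        · exact ⟨a, Set.Subset.rfl, h⟩
        · exact ⟨b, h, Set.Subset.rfl⟩
      have hne := IsCompact.nonempty_iInter_of_directed_nonempty_isCompact_isClosed
        (fun X : c => (X : Set (ℕ → A))) hdir
        (fun X => (hcS X.2).1)
        (fun X => ((hcS X.2).2.1).isCompact)
        (fun X => (hcS X.2).2.1)
      rwa [← Set.sInter_eq_iInter] at hne
    · exact isClosed_sInter fun X hX => (hcS hX).2.1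
    · intro z hz
      exact Set.mem_sInter.2 fun X hX => (hcS hX).2.2.1 z (Set.mem_sInter.1 hz X hX)
    · exact (Set.sInter_subset_of_mem hX₁c).trans (hcS hX₁c).2.2.2
  obtain ⟨M, -, hMmin⟩ := zorn_superset_nonempty S hchainH X₀ hX₀S
  obtain ⟨hMne, hMcl, hMinv, hMsub⟩ := hMmin.prop
  obtain ⟨x, hxM⟩ := hMne
  have hMit : ∀ k, ∀ z ∈ M, sh^[k] z ∈ M := by
    intro k
    induction k with
    | zero => intro z hz; exact hz
    | succ k ih =>
      intro z hz
      rw [Function.iterate_succ_apply']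
      exact hMinv _ (ih z hz)
  have key : ∀ u : List A, (∃ i, occursAt x u i) → ∀ z ∈ M, ∃ i, occursAt z u i := by
    rintro u ⟨i₀, hi₀⟩ z hz
    by_contra hno
    push_neg at hno
    have hYS : {w ∈ M | ∀ i, ¬ occursAt w u i} ∈ S := by
      refine ⟨⟨z, hz, hno⟩, ?_, ?_, fun w hw => hMsub hw.1⟩
      · have hEq : {w ∈ M | ∀ i, ¬ occursAt w u i} =
            M ∩ ⋂ i, {w : ℕ → A | occursAt w u i}ᶜ := by
          ext w; simp [Set.mem_iInter]
        rw [hEq]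
        exact hMcl.inter (isClosed_iInter fun i => (isClopen_cyl u i).isOpen.isClosed_compl)
      · rintro w ⟨hwM, hwno⟩
        refine ⟨hMinv w hwM, fun i hi => hwno (i + 1) ?_⟩
        exact (occursAt_iterate w u 1 i).1 (by simpa using hi)
    have hMY : M ⊆ {w ∈ M | ∀ i, ¬ occursAt w u i} :=
      hMmin.2 hYS (fun w hw => hw.1)
    exact (hMY hxM).2 i₀ hi₀
  refine ⟨x, ?_, ?_⟩
  · intro u hu
    have hcov : M ⊆ ⋃ i : ℕ, {z : ℕ → A | occursAt z u i} := by
      intro z hz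
      obtain ⟨i, hi⟩ := key u hu z hz
      exact Set.mem_iUnion.2 ⟨i, hi⟩
    obtain ⟨s, hs⟩ := hMcl.isCompact.elim_finite_subcover
      (fun i : ℕ => {z : ℕ → A | occursAt z u i})
      (fun i => (isClopen_cyl u i).isOpen) hcov
    refine ⟨s.sup id + u.length, fun i => ?_⟩
    have hzi : sh^[i] x ∈ M := hMit i x hxM
    obtain ⟨j, hjs, hj⟩ := Set.mem_iUnion₂.1 (hs hzi)
    have hocc : occursAt x u (j + i) := (occursAt_iterate x u i j).1 hj
    have hjle : j ≤ s.sup id := Finset.le_sup (f := id) hjs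
    exact ⟨j + i, Nat.le_add_left _ _, by omega, hocc⟩
  · rintro u ⟨i, hi⟩
    have hx₀ : x ∈ closure (Set.range fun n => sh^[n] y) := by
      rw [← hX₀]; exact hMsub hxM
    obtain ⟨w, hwO, n, rfl⟩ :=
      mem_closure_iff.1 hx₀ _ (isClopen_cyl u i).isOpen hi
    exact ⟨i + n, (occursAt_iterate y u n i).1 hwO⟩
end

section
/- If x and y are sequences over a finite alphabet, x is almost periodic, and every factor of y is a factor of x, then every factor of x is a factor of y (minimality of almost periodic sequences). -/
/-- Minimality of almost periodic sequences: if `x` is almost periodic and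
every factor of `y` is a factor of `x`, then every factor of `x` is a factor of `y`. -/
theorem almostPeriodic_minimality {A : Type*} [Fintype A]
    (x y : ℕ → A) (hx : AlmostPeriodic x)
    (hsub : ∀ u : List A, (∃ i, occursAt y u i) → ∃ i, occursAt x u i) :
    ∀ u : List A, (∃ i, occursAt x u i) → ∃ i, occursAt y u i := by
  intro u hu
  obtain ⟨l, hl⟩ := hx u hu
  -- the window of y of length l starting at 0
  set w : List A := List.ofFn (fun k : Fin l => y k) with hw
  have hwlen : w.length = l := by simp [hw]
  have hwy : occursAt y w 0 := by
    intro j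
    simp [hw, List.get_ofFn]
  obtain ⟨i, hi⟩ := hsub w ⟨0, hwy⟩
  obtain ⟨j, hij, hjl, hj⟩ := hl i
  refine ⟨j - i, fun m => ?_⟩
  have hm : (j - i) + (m : ℕ) < l := by
    have : (m : ℕ) < u.length := m.isLt
    omega
  have : y ((j - i) + (m : ℕ)) = x (i + ((j - i) + (m : ℕ))) := by
    have := hi ⟨(j - i) + (m : ℕ), by omega⟩
    simp [hw, List.get_ofFn] at this
    exact this.symm
  rw [this]
  have : i + ((j - i) + (m : ℕ)) = j + (m : ℕ) := by omega
  rw [this]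
  exact hj m
end

section
/- If x is a computable almost periodic sequence over a finite alphabet, then the regulator r_x is computable if and only if the set of factors Fac(x) is decidable. -/
set_option maxHeartbeats 1000000


/-- The regulator of almost periodicity: `regulator x n` is the least `l` such
that every length-`n` factor of `x` occurs in every length-`l` window of `x`. -/
noncomputable def regulator {A : Type*} (x : ℕ → A) (n : ℕ) : ℕ :=
  sInf {l : ℕ | ∀ u : List A, u.length = n → (∃ i, occursAt x u i) →
    ∀ i : ℕ, ∃ j : ℕ, i ≤ j ∧ j + n ≤ i + l ∧ occursAt x u j}

namespace RegAux

open List Primrec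

/-! ### Generic computability lemmas -/

section CompList

variable {α β σ : Type} [Primcodable α] [Primcodable β] [Primcodable σ]

theorem option_toList_map (o : Option β) (g : β → σ) :
    (o.map g).toList = o.toList.map g := by cases o <;> rfl

/-- Mapping a computable function over a computable list is computable. -/
theorem clist_map {f : α → List β} {g : α → β → σ} (hf : Computable f)
    (hg : Computable₂ g) : Computable fun a => (f a).map (g a) := by
  have hstep : Computable₂ fun (a : α) (p : ℕ × List σ) =>
      p.2 ++ ((f a)[p.1]?.map (g a)).toList := by
    have h1 : Computable fun q : α × ℕ × List σ => (f q.1)[q.2.1]? :=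
      Primrec.list_getElem?.to_comp.comp (hf.comp Computable.fst)
        (Computable.fst.comp Computable.snd)
    have h2 : Computable fun q : α × ℕ × List σ => ((f q.1)[q.2.1]?.map (g q.1)) :=
      Computable.option_map h1 ((hg.comp (Computable.fst.comp Computable.fst)
        Computable.snd).to₂)
    exact (Primrec.list_append.to_comp.comp
      (Computable.snd.comp Computable.snd)
      (Primrec.optionToList.to_comp.comp h2)).to₂
  have H := Computable.nat_rec (f := fun a => (f a).length)
    (g := fun _ : α => ([] : List σ)) (h := fun a p => p.2 ++ ((f a)[p.1]?.map (g a)).toList)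
    (Primrec.list_length.to_comp.comp hf) (Computable.const []) hstep
  refine H.of_eq fun a => ?_
  have key : ∀ m : ℕ,
      (Nat.rec ([] : List σ) (fun y IH => IH ++ (((f a)[y]?.map (g a)).toList)) m : List σ)
        = ((f a).take m).map (g a) := by
    intro m
    induction m with
    | zero => simp
    | succ m ih =>
      have hstep : (Nat.rec ([] : List σ)
          (fun y IH => IH ++ (((f a)[y]?.map (g a)).toList)) (m + 1) : List σ)
          = (Nat.rec ([] : List σ)
            (fun y IH => IH ++ (((f a)[y]?.map (g a)).toList)) m : List σ)
            ++ (((f a)[m]?.map (g a)).toList) := rfl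
      rw [hstep, ih, List.take_succ, List.map_append, option_toList_map]
  exact key ((f a).length) ▸ congrArg (fun t => t.map (g a)) (List.take_length (l := f a))

theorem primrec_allId : Primrec fun l : List Bool => l.all id := by
  have := Primrec.list_foldr (α := List Bool) (β := Bool) (σ := Bool)
    Primrec.id (Primrec.const true)
    ((Primrec.dom_bool₂ (· && ·)).comp (Primrec.fst.comp Primrec.snd)
      (Primrec.snd.comp Primrec.snd)).to₂
  refine this.of_eq fun l => ?_
  induction l with
  | nil => rfl
  | cons a l ih =>
    show (a && _) = (a && l.all id)
    exact congrArg (a && ·) ih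

theorem primrec_anyId : Primrec fun l : List Bool => l.any id := by
  have := Primrec.list_foldr (α := List Bool) (β := Bool) (σ := Bool)
    Primrec.id (Primrec.const false)
    ((Primrec.dom_bool₂ (· || ·)).comp (Primrec.fst.comp Primrec.snd)
      (Primrec.snd.comp Primrec.snd)).to₂
  refine this.of_eq fun l => ?_
  induction l with
  | nil => rfl
  | cons a l ih =>
    show (a || _) = (a || l.any id)
    exact congrArg (a || ·) ih

theorem all_map_id {l : List β} {g : β → Bool} :
    ((l.map g).all id = true) ↔ ∀ b ∈ l, g b = true := by
  simp [List.all_eq_true]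

theorem any_map_id {l : List β} {g : β → Bool} :
    ((l.map g).any id = true) ↔ ∃ b ∈ l, g b = true := by
  simp [List.any_eq_true]

end CompList

/-! ### Windows of a sequence -/

section Windows

variable {A : Type} [Primcodable A]

local instance : DecidableEq A := Encodable.decidableEqOfEncodable A

/-- The window of `x` of length `n` starting at `i`. -/
def wnd (x : ℕ → A) (i n : ℕ) : List A := (List.range n).map fun k => x (i + k)

@[simp] theorem length_wnd (x : ℕ → A) (i n : ℕ) : (wnd x i n).length = n := by
  simp [wnd]

theorem getElem_wnd (x : ℕ → A) (i n k : ℕ) (hk : k < n) (h' : k < (wnd x i n).length) :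
    (wnd x i n)[k] = x (i + k) := by
  simp [wnd]

theorem occursAt_iff (x : ℕ → A) (u : List A) (i : ℕ) :
    occursAt x u i ↔ wnd x i u.length = u := by
  constructor
  · intro h
    refine List.ext_getElem (by simp) fun k h1 h2 => ?_
    have hk : k < u.length := h2
    rw [getElem_wnd x i u.length k hk h1]
    have := h ⟨k, hk⟩
    simpa [List.get_eq_getElem] using this
  · intro h j
    have hj : (j : ℕ) < (wnd x i u.length).length := by simp [j.2]
    have h1 := getElem_wnd x i u.length j j.2 hj
    have h2 : (wnd x i u.length)[(j : ℕ)]'hj = u.get j := by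
      simp only [h, List.get_eq_getElem]
    rw [← h1, h2]

theorem factor_wnd (x : ℕ → A) (i n : ℕ) : ∃ j, occursAt x (wnd x i n) j := by
  refine ⟨i, ?_⟩
  rw [occursAt_iff]
  simp

/-- Extraction of the window of length `n` at offset `j` from a finite word. -/
def win (w : List A) (j n : ℕ) : List A := (List.range n).filterMap fun k => w[j + k]?

theorem filterMap_range_eq_map {σ : Type} {g : ℕ → Option σ} {h : ℕ → σ} {n : ℕ}
    (H : ∀ k < n, g k = some (h k)) :
    (List.range n).filterMap g = (List.range n).map h := by
  induction n with
  | zero => simp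
  | succ n ih =>
    rw [List.range_succ, List.filterMap_append, List.map_append,
      ih fun k hk => H k (Nat.lt_succ_of_lt hk)]
    simp [H n (Nat.lt_succ_self n)]

theorem win_wnd (x : ℕ → A) {i m j n : ℕ} (h : j + n ≤ m) :
    win (wnd x i m) j n = wnd x (i + j) n := by
  unfold win wnd
  refine filterMap_range_eq_map fun k hk => ?_
  have hjk : j + k < m := lt_of_lt_of_le (by omega) h
  rw [List.getElem?_map, List.getElem?_range hjk]
  simp [Nat.add_assoc]

theorem primrec_win : Primrec fun p : List A × ℕ × ℕ => win p.1 p.2.1 p.2.2 := by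
  unfold win
  exact Primrec.listFilterMap
    (Primrec.list_range.comp (Primrec.snd.comp Primrec.snd))
    ((Primrec.list_getElem?.comp (Primrec.fst.comp Primrec.fst)
      (Primrec.nat_add.comp (Primrec.fst.comp (Primrec.snd.comp Primrec.fst))
        Primrec.snd)).to₂)

/-- The prefix function `m ↦ wnd x 0 m` is computable whenever `x` is. -/
theorem computable_pre {x : ℕ → A} (hx : Computable x) :
    Computable fun m => wnd x 0 m := by
  have hstep : Computable₂ fun (_ : ℕ) (p : ℕ × List A) => p.2 ++ [x p.1] :=
    (Primrec.list_append.to_comp.comp (Computable.snd.comp Computable.snd)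
      (Primrec.list_cons.to_comp.comp (hx.comp (Computable.fst.comp Computable.snd))
        (Computable.const []))).to₂
  have H := Computable.nat_rec (f := fun m : ℕ => m) (g := fun _ : ℕ => ([] : List A))
    (h := fun _ p => p.2 ++ [x p.1]) Computable.id (Computable.const []) hstep
  refine H.of_eq fun m => ?_
  induction m with
  | zero => simp [wnd]
  | succ m ih => rw [show (Nat.rec ([] : List A) (fun y IH => IH ++ [x y]) (m + 1) : List A)
      = (Nat.rec ([] : List A) (fun y IH => IH ++ [x y]) m : List A) ++ [x m] from rfl, ih]
                 simp [wnd, List.range_succ]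

end Windows

/-! ### All words of a given length over a finite alphabet -/

section Words

variable {A : Type} [Primcodable A] [Fintype A]

/-- The list of all words of length `n` over the (finite) alphabet `A`. -/
noncomputable def words (n : ℕ) : List (List A) :=
  Nat.rec [[]] (fun _ L => L.flatMap fun w => (Finset.univ.toList (α := A)).map
    fun a => a :: w) n

theorem mem_words {n : ℕ} {w : List A} : w ∈ words n ↔ w.length = n := by
  induction n generalizing w with
  | zero => simp [words]
  | succ n ih =>
    show w ∈ (words n).flatMap _ ↔ _
    simp only [List.mem_flatMap, List.mem_map]
    constructor
    · rintro ⟨w', hw', a, _, rfl⟩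
      simp [ih.1 hw']
    · intro hw
      match w, hw with
      | a :: w', hw =>
        exact ⟨w', ih.2 (by simpa using hw), a, by simp [Finset.mem_toList], rfl⟩

theorem primrec_words : Primrec (words (A := A)) := by
  unfold words
  apply Primrec.nat_rec₁
  have h1 : Primrec fun q : (ℕ × List (List A)) × List A =>
      (Finset.univ.toList (α := A)).map fun a => a :: q.2 := by
    apply Primrec.list_map (Primrec.const (Finset.univ.toList (α := A)))
    apply Primrec₂.mk
    exact Primrec.list_cons.comp (Primrec.snd : Primrec fun q :
        ((ℕ × List (List A)) × List A) × A => q.2)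
      ((Primrec.snd.comp Primrec.fst : Primrec fun q :
        ((ℕ × List (List A)) × List A) × A => q.1.2))
  apply Primrec₂.mk
  exact Primrec.list_flatMap
    (Primrec.snd : Primrec fun p : ℕ × List (List A) => p.2) (Primrec₂.mk h1)

end Words

/-! ### The decision procedures -/

section Main

variable {A : Type} [Primcodable A] [Fintype A]

local instance inst_s10 : DecidableEq A := Encodable.decidableEqOfEncodable A

/-- Bool-valued test: `u` occurs (as a contiguous block) inside `w`. -/
def occB (u w : List A) : Bool :=
  ((List.range (w.length + 1)).map fun j =>
    decide (j + u.length ≤ w.length) && decide (win w j u.length = u)).any id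

theorem occB_iff {u w : List A} :
    occB u w = true ↔ ∃ j, j + u.length ≤ w.length ∧ win w j u.length = u := by
  unfold occB
  rw [any_map_id]
  constructor
  · rintro ⟨j, _, hj⟩
    simp only [Bool.and_eq_true, decide_eq_true_eq] at hj
    exact ⟨j, hj⟩
  · rintro ⟨j, h1, h2⟩
    refine ⟨j, ?_, ?_⟩
    · simp only [List.mem_range]; omega
    · simp [h1, h2]

theorem primrec_occB : Primrec₂ (occB (A := A)) := by
  unfold occB
  apply Primrec₂.mk
  apply primrec_anyId.comp
  have hrange : Primrec fun p : List A × List A => List.range (p.2.length + 1) :=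
    Primrec.list_range.comp (Primrec.succ.comp (Primrec.list_length.comp Primrec.snd))
  apply Primrec.list_map hrange
  apply Primrec₂.mk
  have h1 : Primrec fun q : (List A × List A) × ℕ =>
      decide (q.2 + q.1.1.length ≤ q.1.2.length) :=
    PrimrecPred.decide <| Primrec.nat_le.comp
      (Primrec.nat_add.comp Primrec.snd
        (Primrec.list_length.comp (Primrec.fst.comp Primrec.fst)))
      (Primrec.list_length.comp (Primrec.snd.comp Primrec.fst))
  have h2 : Primrec fun q : (List A × List A) × ℕ =>
      decide (win q.1.2 q.2 q.1.1.length = q.1.1) :=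
    PrimrecPred.decide <| Primrec.eq.comp
      (primrec_win.comp (Primrec.pair (Primrec.snd.comp Primrec.fst)
        (Primrec.pair Primrec.snd
          (Primrec.list_length.comp (Primrec.fst.comp Primrec.fst)))))
      (Primrec.fst.comp Primrec.fst)
  exact (Primrec.dom_bool₂ (· && ·)).comp h1 h2

/-- Bool-valued test used to compute the regulator: every `f`-factor of length `l`
contains every `f`-factor of length `n`. -/
noncomputable def qB (f : List A → Bool) (n l : ℕ) : Bool :=
  ((words l).map fun w => !(f w) ||
    (((words n).map fun u => !(f u) || occB u w).all id)).all id

theorem qB_iff {f : List A → Bool} {n l : ℕ} :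
    qB f n l = true ↔ ∀ w ∈ words (A := A) l, f w = true →
      ∀ u ∈ words (A := A) n, f u = true → occB u w = true := by
  unfold qB
  rw [all_map_id]
  refine forall₂_congr fun w _ => ?_
  cases hfw : f w with
  | false => simp
  | true =>
    simp only [hfw, Bool.not_true, Bool.false_or, true_implies]
    rw [all_map_id]
    refine forall₂_congr fun u _ => ?_
    cases hfu : f u <;> simp

theorem computable_qB {f : List A → Bool} (hf : Computable f) :
    Computable₂ (qB f) := by
  unfold qB
  apply Computable₂.mk
  apply (primrec_allId.to_comp).comp
  apply clist_map (primrec_words.to_comp.comp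
    (Computable.snd : Computable fun p : ℕ × ℕ => p.2))
  apply Computable₂.mk
  -- context : (ℕ × ℕ) × List A ; goal : !(f w) || all ...
  have hnotfw : Computable fun p : (ℕ × ℕ) × List A => !(f p.2) :=
    (Primrec.dom_bool (!·)).to_comp.comp (hf.comp Computable.snd)
  have hinner : Computable fun p : (ℕ × ℕ) × List A =>
      (((words p.1.1).map fun u => !(f u) || occB u p.2).all id) := by
    apply (primrec_allId.to_comp).comp
    apply clist_map (primrec_words.to_comp.comp
      ((Computable.fst.comp Computable.fst :
        Computable fun p : (ℕ × ℕ) × List A => p.1.1)))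
    apply Computable₂.mk
    exact (Primrec.dom_bool₂ (· || ·)).to_comp.comp
      ((Primrec.dom_bool (!·)).to_comp.comp (hf.comp Computable.snd))
      (primrec_occB.to_comp.comp Computable.snd
        (Computable.snd.comp Computable.fst))
  exact (Primrec.dom_bool₂ (· || ·)).to_comp.comp hnotfw hinner

/-- Bool-valued test used to decide factors given the regulator. -/
def f1B (u : List A) (N : ℕ) (P : List A) : Bool :=
  ((List.range N).map fun j => decide (win P j u.length = u)).any id

theorem f1B_iff {u : List A} {N : ℕ} {P : List A} :
    f1B u N P = true ↔ ∃ j < N, win P j u.length = u := by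
  unfold f1B
  rw [any_map_id]
  simp [List.mem_range]

theorem primrec_f1B : Primrec fun p : List A × ℕ × List A => f1B p.1 p.2.1 p.2.2 := by
  unfold f1B
  apply primrec_anyId.comp
  have hrange : Primrec fun p : List A × ℕ × List A => List.range p.2.1 :=
    Primrec.list_range.comp (Primrec.fst.comp Primrec.snd)
  apply Primrec.list_map hrange
  apply Primrec₂.mk
  have h2 : Primrec fun q : (List A × ℕ × List A) × ℕ =>
      decide (win q.1.2.2 q.2 q.1.1.length = q.1.1) :=
    PrimrecPred.decide <| Primrec.eq.comp
      (primrec_win.comp (Primrec.pair (Primrec.snd.comp (Primrec.snd.comp Primrec.fst))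
        (Primrec.pair Primrec.snd
          (Primrec.list_length.comp (Primrec.fst.comp Primrec.fst)))))
      (Primrec.fst.comp Primrec.fst)
  exact h2

/-! ### The mathematics -/

/-- The set of which the regulator is the infimum. -/
def S (x : ℕ → A) (n : ℕ) : Set ℕ :=
  {l : ℕ | ∀ u : List A, u.length = n → (∃ i, occursAt x u i) →
    ∀ i : ℕ, ∃ j : ℕ, i ≤ j ∧ j + n ≤ i + l ∧ occursAt x u j}

theorem S_nonempty (x : ℕ → A) (hap : AlmostPeriodic x) (n : ℕ) :
    (S x n).Nonempty := by
  classical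
  set g : List A → ℕ := fun u =>
    if h : ∃ i, occursAt x u i then Classical.choose (hap u h) else 0 with hg
  refine ⟨((words (A := A) n).map g).sum, ?_⟩
  intro u hu hocc i
  have hmem : g u ∈ (words (A := A) n).map g :=
    List.mem_map.2 ⟨u, mem_words.2 hu, rfl⟩
  have hle : g u ≤ ((words (A := A) n).map g).sum :=
    List.single_le_sum (fun _ _ => Nat.zero_le _) _ hmem
  have hgu : g u = Classical.choose (hap u hocc) := by simp [hg, hocc]
  obtain ⟨j, h1, h2, h3⟩ := Classical.choose_spec (hap u hocc) i
  exact ⟨j, h1, by omega, h3⟩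

theorem regulator_mem (x : ℕ → A) (hap : AlmostPeriodic x) (n : ℕ) :
    regulator x n ∈ S x n :=
  Nat.sInf_mem (S_nonempty x hap n)

theorem qB_iff_mem_S {x : ℕ → A} {f : List A → Bool}
    (hfspec : ∀ u : List A, f u = true ↔ ∃ i, occursAt x u i) (n l : ℕ) :
    qB f n l = true ↔ l ∈ S x n := by
  rw [qB_iff]
  constructor
  · intro H u hu hocc i
    -- w := window of x of length l at i
    have hw : occursAt x (wnd x i l) i := (occursAt_iff x _ i).2 (by simp)
    have hwf : f (wnd x i l) = true := (hfspec _).2 ⟨i, hw⟩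
    have hwm : wnd x i l ∈ words (A := A) l := mem_words.2 (by simp)
    have huf : f u = true := (hfspec u).2 hocc
    have hum : u ∈ words (A := A) n := mem_words.2 hu
    obtain ⟨j, hj1, hj2⟩ := occB_iff.1 (H _ hwm hwf u hum huf)
    rw [length_wnd, hu] at hj1
    rw [hu, win_wnd x hj1] at hj2
    exact ⟨i + j, Nat.le_add_right i j, by omega,
      (occursAt_iff x u (i + j)).2 (by rw [hu]; exact hj2)⟩
  · intro H w hwm hwf u hum huf
    have hwl : w.length = l := mem_words.1 hwm
    have hun : u.length = n := mem_words.1 hum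
    obtain ⟨i, hi⟩ := (hfspec w).1 hwf
    have hw : wnd x i l = w := by
      have := (occursAt_iff x w i).1 hi; rwa [hwl] at this
    obtain ⟨iu, hiu⟩ := (hfspec u).1 huf
    obtain ⟨j, hj1, hj2, hj3⟩ := H u hun ⟨iu, hiu⟩ i
    refine occB_iff.2 ⟨j - i, ?_, ?_⟩
    · rw [hwl, hun]; omega
    · rw [← hw, hun, win_wnd x (by omega)]
      have : i + (j - i) = j := by omega
      rw [this]
      have := (occursAt_iff x u j).1 hj3
      rwa [hun] at this

/-! ### The two directions -/

theorem direction1 {x : ℕ → A} (hx : Computable x) (hap : AlmostPeriodic x)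
    (hr : Computable (regulator x)) :
    ∃ f : List A → Bool, Computable f ∧
      ∀ u : List A, f u = true ↔ ∃ i, occursAt x u i := by
  refine ⟨fun u => f1B u (regulator x u.length + 1)
    (wnd x 0 (regulator x u.length + 1 + u.length)), ?_, ?_⟩
  · have hN : Computable fun u : List A => regulator x u.length + 1 :=
      Computable.succ.comp (hr.comp Primrec.list_length.to_comp)
    have hP : Computable fun u : List A =>
        wnd x 0 (regulator x u.length + 1 + u.length) :=
      (computable_pre hx).comp (Primrec.nat_add.to_comp.comp hN
        Primrec.list_length.to_comp)
    have hall : Computable fun u : List A =>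
        (u, (regulator x u.length + 1, wnd x 0 (regulator x u.length + 1 + u.length))) :=
      (Computable.id : Computable fun u : List A => u).pair (hN.pair hP)
    have hcomp := primrec_f1B.to_comp.comp hall
    exact hcomp
  · intro u
    rw [f1B_iff]
    constructor
    · rintro ⟨j, hj, hwin⟩
      have hle : j + u.length ≤ regulator x u.length + 1 + u.length := by omega
      rw [win_wnd x hle, Nat.zero_add] at hwin
      exact ⟨j, (occursAt_iff x u j).2 hwin⟩
    · intro hocc
      obtain ⟨j, _, hj2, hj3⟩ := regulator_mem x hap u.length u rfl hocc 0
      refine ⟨j, by omega, ?_⟩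
      have hle : j + u.length ≤ regulator x u.length + 1 + u.length := by omega
      rw [win_wnd x hle, Nat.zero_add]
      exact (occursAt_iff x u j).1 hj3

theorem direction2 {x : ℕ → A} (hap : AlmostPeriodic x)
    {f : List A → Bool} (hf : Computable f)
    (hfspec : ∀ u : List A, f u = true ↔ ∃ i, occursAt x u i) :
    Computable (regulator x) := by
  have hq : Computable₂ (qB f) := computable_qB hf
  have hpart : Partrec fun n => Nat.rfind fun l => (qB f n l : Part Bool) :=
    Partrec.rfind hq.partrec₂
  refine hpart.of_eq_tot fun n => ?_
  apply Nat.mem_rfind.2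
  constructor
  · rw [Part.coe_some, Part.mem_some_iff]
    exact ((qB_iff_mem_S hfspec n _).2 (regulator_mem x hap n)).symm
  · intro m hm
    rw [Part.coe_some, Part.mem_some_iff]
    have : m ∉ S x n := Nat.notMem_of_lt_sInf hm
    cases hq' : qB f n m
    · rfl
    · exact absurd ((qB_iff_mem_S hfspec n m).1 hq') this

end Main

end RegAux

/-- For a computable almost periodic sequence over a finite alphabet, the
regulator is computable iff the set of factors is (computably) decidable. -/
theorem regulator_computable_iff_factors_decidable {A : Type} [Primcodable A] [Fintype A]
    (x : ℕ → A) (hx : Computable x) (hap : AlmostPeriodic x) :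
    Computable (regulator x) ↔
      ∃ f : List A → Bool, Computable f ∧
        ∀ u : List A, f u = true ↔ ∃ i, occursAt x u i := by
  constructor
  · exact RegAux.direction1 hx hap
  · rintro ⟨f, hf, hfspec⟩
    exact RegAux.direction2 hap hf hfspec
end

section
/- The image of an almost periodic sequence under a reversible uniform finite-state transducer with m states is almost periodic; moreover, every length-n factor of M(x) that occurs infinitely often occurs in every window of length g^m(n) - 1, where g(n) = r_x(n) + 1. -/
namespace RevTransAux

variable {A Q : Type*}

/-- The state reached after reading the segment `x[t, t+s)` starting from `q`. -/
def runSeg (x : ℕ → A) (mu : Q → A → Q) (t : ℕ) : ℕ → Q → Q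
  | 0 => id
  | s + 1 => fun q => mu (runSeg x mu t s q) (x (t + s))

lemma runSeg_bij (x : ℕ → A) (mu : Q → A → Q)
    (hrev : ∀ a, Function.Bijective fun q => mu q a) (t s : ℕ) :
    Function.Bijective (runSeg x mu t s) := by
  induction s with
  | zero => exact Function.bijective_id
  | succ s ih =>
      have := (hrev (x (t + s))).comp ih
      exact this

lemma runSeg_p (x : ℕ → A) (mu : Q → A → Q) (p : ℕ → Q)
    (hp : ∀ t, p (t + 1) = mu (p t) (x t)) (t : ℕ) :
    ∀ s, p (t + s) = runSeg x mu t s (p t)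
  | 0 => rfl
  | s + 1 => by
      show p ((t + s) + 1) = mu (runSeg x mu t s (p t)) (x (t + s))
      rw [hp (t + s), runSeg_p x mu p hp t s]

lemma runSeg_congr (x : ℕ → A) (mu : Q → A → Q) {t t' : ℕ} :
    ∀ {s : ℕ}, (∀ τ, τ < s → x (t + τ) = x (t' + τ)) →
      ∀ q, runSeg x mu t s q = runSeg x mu t' s q
  | 0, _, q => rfl
  | s + 1, h, q => by
      show mu (runSeg x mu t s q) (x (t + s)) = mu (runSeg x mu t' s q) (x (t' + s))
      rw [runSeg_congr x mu (fun τ hτ => h τ (by omega)) q, h s (by omega)]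

lemma runSeg_add (x : ℕ → A) (mu : Q → A → Q) (t s₁ : ℕ) :
    ∀ (s₂ : ℕ) (q : Q), runSeg x mu t (s₁ + s₂) q
      = runSeg x mu (t + s₁) s₂ (runSeg x mu t s₁ q)
  | 0, q => rfl
  | s₂ + 1, q => by
      show mu (runSeg x mu t (s₁ + s₂) q) (x (t + (s₁ + s₂)))
        = mu (runSeg x mu (t + s₁) s₂ (runSeg x mu t s₁ q)) (x ((t + s₁) + s₂))
      rw [runSeg_add x mu t s₁ s₂ q, Nat.add_assoc]

/-- The set of entry states `q'` of the word `x[a, a+L)` from which the target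
pair (the length-`n` word at `j'` together with the state `qT`) is produced
somewhere inside. -/
noncomputable def SF [Fintype Q] (x : ℕ → A) (mu : Q → A → Q) (qT : Q)
    (n j' a L : ℕ) : Finset Q :=
  letI := Classical.propDecidable
  Finset.univ.filter fun q' =>
    ∃ σ, σ + n ≤ L ∧ (∀ τ, τ < n → x (a + σ + τ) = x (j' + τ)) ∧
      runSeg x mu a σ q' = qT

lemma mem_SF [Fintype Q] {x : ℕ → A} {mu : Q → A → Q} {qT : Q}
    {n j' a L : ℕ} {q' : Q} :
    q' ∈ SF x mu qT n j' a L ↔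
      ∃ σ, σ + n ≤ L ∧ (∀ τ, τ < n → x (a + σ + τ) = x (j' + τ)) ∧
        runSeg x mu a σ q' = qT := by
  classical
  simp [SF]

/-- If a copy of the word anchored at `a` occurs at `t` (as a segment of `x`)
and the actual entry state `p t` is in `SF`, then the target actually occurs
inside `[t, t+L)`. -/
lemma realize [Fintype Q] (x : ℕ → A) (mu : Q → A → Q) (p : ℕ → Q)
    (hp : ∀ t, p (t + 1) = mu (p t) (x t)) (n j' : ℕ) {a L t : ℕ}
    (hmatch : ∀ τ, τ < L → x (t + τ) = x (a + τ))
    (hmem : p t ∈ SF x mu (p j') n j' a L) :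
    ∃ jj, t ≤ jj ∧ jj + n ≤ t + L ∧
      (∀ τ, τ < n → x (jj + τ) = x (j' + τ)) ∧ p jj = p j' := by
  rw [mem_SF] at hmem
  obtain ⟨σ, h1, h2, h3⟩ := hmem
  refine ⟨t + σ, Nat.le_add_right _ _, by omega, ?_, ?_⟩
  · intro τ hτ
    have ha := hmatch (σ + τ) (by omega)
    calc x (t + σ + τ) = x (t + (σ + τ)) := by rw [Nat.add_assoc]
      _ = x (a + (σ + τ)) := ha
      _ = x (a + σ + τ) := by rw [Nat.add_assoc]
      _ = x (j' + τ) := h2 τ hτ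
  · rw [runSeg_p x mu p hp t σ,
      runSeg_congr x mu (fun τ hτ => hmatch τ (by omega)) (p t)]
    exact h3

/-- Pull back the state set of a word through an occurrence of it inside a
longer word. -/
lemma pull [Fintype Q] (x : ℕ → A) (mu : Q → A → Q) (qT : Q) (n j' : ℕ)
    {a L t τ L' : ℕ}
    (hmatch : ∀ τ₂, τ₂ < L → x (t + τ + τ₂) = x (a + τ₂))
    (hLL : τ + L ≤ L') {q' : Q}
    (hq : runSeg x mu t τ q' ∈ SF x mu qT n j' a L) :
    q' ∈ SF x mu qT n j' t L' := by
  rw [mem_SF] at hq ⊢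
  obtain ⟨σ, h1, h2, h3⟩ := hq
  refine ⟨τ + σ, by omega, ?_, ?_⟩
  · intro τ₂ hτ₂
    have ha := hmatch (σ + τ₂) (by omega)
    have he : t + (τ + σ) + τ₂ = t + τ + (σ + τ₂) := by omega
    calc x (t + (τ + σ) + τ₂) = x (t + τ + (σ + τ₂)) := by rw [he]
      _ = x (a + (σ + τ₂)) := ha
      _ = x (a + σ + τ₂) := by rw [Nat.add_assoc]
      _ = x (j' + τ₂) := h2 τ₂ hτ₂
  · rw [runSeg_add x mu t τ σ q',
      runSeg_congr x mu (fun τ₃ hτ₃ => hmatch τ₃ (by omega)) (runSeg x mu t τ q')]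
    exact h3

lemma card_grow {Q : Type*} [Fintype Q] {π : Q → Q} (hπ : Function.Bijective π)
    {S T : Finset Q} {q₀ : Q}
    (hpull : ∀ q', π q' ∈ S → q' ∈ T) (hq₀T : q₀ ∈ T) (hq₀ : π q₀ ∉ S) :
    S.card + 1 ≤ T.card := by
  classical
  let e := Equiv.ofBijective π hπ
  have hsub : insert q₀ (S.image e.symm) ⊆ T := by
    intro q hq
    rcases Finset.mem_insert.mp hq with rfl | hq
    · exact hq₀T
    · obtain ⟨q₁, hq₁, rfl⟩ := Finset.mem_image.mp hq
      refine hpull _ ?_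
      rw [show π (e.symm q₁) = e (e.symm q₁) from rfl, e.apply_symm_apply]
      exact hq₁
  have hnot : q₀ ∉ S.image e.symm := by
    intro hq
    obtain ⟨q₁, hq₁, hh⟩ := Finset.mem_image.mp hq
    apply hq₀
    have hπq : π q₀ = q₁ := by
      rw [← hh, show π (e.symm q₁) = e (e.symm q₁) from rfl, e.apply_symm_apply]
    rwa [hπq]
  have h1 : (insert q₀ (S.image e.symm)).card = S.card + 1 := by
    rw [Finset.card_insert_of_notMem hnot,
      Finset.card_image_of_injective _ e.symm.injective]
  calc S.card + 1 = (insert q₀ (S.image e.symm)).card := h1.symm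
    _ ≤ T.card := Finset.card_le_card hsub

lemma walk {G : ℕ → Prop} {a b : ℕ} (ha : ¬ G a) (hb : G b) :
    ∃ t, (¬ G t ∧ G (t + 1)) ∨ (G t ∧ ¬ G (t + 1)) := by
  classical
  rcases lt_trichotomy a b with h | h | h
  · have hex : ∃ s, G (a + s) := ⟨b - a, by
      have he : a + (b - a) = b := by omega
      rw [he]; exact hb⟩
    have hs := Nat.find_spec hex
    have hne : Nat.find hex ≠ 0 := by
      intro h0
      rw [h0] at hs
      exact ha (by simpa using hs)
    refine ⟨a + (Nat.find hex - 1), Or.inl ⟨Nat.find_min hex (by omega), ?_⟩⟩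
    have he : a + (Nat.find hex - 1) + 1 = a + Nat.find hex := by omega
    rw [he]; exact hs
  · exact absurd (by rwa [h]) ha
  · have hex : ∃ s, ¬ G (b + s) := ⟨a - b, by
      have he : b + (a - b) = a := by omega
      rw [he]; exact ha⟩
    have hs := Nat.find_spec hex
    have hne : Nat.find hex ≠ 0 := by
      intro h0
      rw [h0] at hs
      exact hs (by simpa using hb)
    refine ⟨b + (Nat.find hex - 1),
      Or.inr ⟨of_not_not (Nat.find_min hex (by omega)), ?_⟩⟩
    have he : b + (Nat.find hex - 1) + 1 = b + Nat.find hex := by omega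
    rw [he]; exact hs

/-- Main combinatorial lemma: the target pair (length-`n` word at `j'` with
state `p j'`) occurs in every window of length `g^[m] n - 1`. -/
lemma main_aux {A Q : Type*} [Fintype Q] {m : ℕ} (hm : Fintype.card Q = m)
    (x : ℕ → A) (mu : Q → A → Q)
    (hrev : ∀ a, Function.Bijective fun q => mu q a)
    (r : ℕ → ℕ)
    (hwin : ∀ len a i, ∃ jv, i ≤ jv ∧ jv + len ≤ i + r len ∧
      ∀ τ, τ < len → x (jv + τ) = x (a + τ))
    (hrmono : ∀ b c, b ≤ c → r b ≤ r c)
    (p : ℕ → Q) (hp : ∀ t, p (t + 1) = mu (p t) (x t))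
    (n : ℕ) (hn : 1 ≤ n) (j' i : ℕ) :
    ∃ j, i ≤ j ∧ j + n ≤ i + ((fun t => r t + 1)^[m] n - 1) ∧
      (∀ τ, τ < n → x (j + τ) = x (j' + τ)) ∧ p j = p j' := by
  have hm1 : 1 ≤ m := by
    haveI : Nonempty Q := ⟨p 0⟩
    have := Fintype.card_pos (α := Q)
    omega
  set L : ℕ → ℕ := fun k => (fun t => r t + 1)^[k] n with hLdef
  have hL0 : L 0 = n := rfl
  have hLs : ∀ k, L (k + 1) = r (L k) + 1 := by
    intro k
    simp only [hLdef, Function.iterate_succ_apply']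
  have hrge : ∀ s, s ≤ r s := by
    intro s
    obtain ⟨jv, h1, h2, _⟩ := hwin s 0 0
    omega
  have hLn : ∀ k, n ≤ L k := by
    intro k
    induction k with
    | zero => omega
    | succ k ih =>
        rw [hLs]
        have := hrge (L k)
        omega
  have hLmono : ∀ {k k'}, k ≤ k' → L k ≤ L k' := by
    have hstep : ∀ k, L k ≤ L (k + 1) := by
      intro k
      rw [hLs]
      have := hrge (L k)
      omega
    intro k k' h
    exact monotone_nat_of_le_succ hstep h
  have hbound : (fun t => r t + 1)^[m] n - 1 = r (L (m - 1)) := by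
    obtain ⟨m', rfl⟩ : ∃ m', m = m' + 1 := ⟨m - 1, by omega⟩
    have h1 : (fun t : ℕ => r t + 1)^[m' + 1] n
        = (fun t : ℕ => r t + 1) ((fun t : ℕ => r t + 1)^[m'] n) :=
      Function.iterate_succ_apply' _ _ _
    have h2 : L (m' + 1 - 1) = (fun t : ℕ => r t + 1)^[m'] n := rfl
    rw [h2, h1]
    show r ((fun t : ℕ => r t + 1)^[m'] n) + 1 - 1
      = r ((fun t : ℕ => r t + 1)^[m'] n)
    omega
  set G : ℕ → ℕ → Prop := fun k i₁ => ∃ j, i₁ ≤ j ∧ j + n ≤ i₁ + r (L k) ∧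
    (∀ τ, τ < n → x (j + τ) = x (j' + τ)) ∧ p j = p j' with hGdef
  have hGself : ∀ k, G k j' := by
    intro k
    refine ⟨j', le_refl _, ?_, fun τ _ => rfl, rfl⟩
    have := hLn k
    have := hrge (L k)
    omega
  have claim : ∀ k, (∃ k' ≤ k, ∀ i', G k' i') ∨
      ∃ a, k + 1 ≤ (SF x mu (p j') n j' a (L k)).card := by
    intro k
    induction k with
    | zero =>
        right
        refine ⟨j', ?_⟩
        have hmem : p j' ∈ SF x mu (p j') n j' j' (L 0) := by
          rw [mem_SF]
          exact ⟨0, by rw [hL0]; omega,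
            fun τ hτ => by rw [Nat.add_zero], rfl⟩
        have := Finset.card_pos.mpr ⟨p j', hmem⟩
        omega
    | succ k ih =>
        rcases ih with ⟨k', hk', hall⟩ | ⟨a, hcard⟩
        · exact Or.inl ⟨k', le_trans hk' (Nat.le_succ _), hall⟩
        by_cases hallk : ∀ i', G k i'
        · exact Or.inl ⟨k, Nat.le_succ _, hallk⟩
        push_neg at hallk
        obtain ⟨ibad, hbad⟩ := hallk
        obtain ⟨t, hcase⟩ := walk hbad (hGself k)
        right
        refine ⟨t, ?_⟩
        rcases hcase with ⟨hbt, hgt1⟩ | ⟨hgt, hbt1⟩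
        · -- forward boundary: bad at t, good at t+1
          obtain ⟨j, hj1, hj2, hjM, hjp⟩ := hgt1
          have hjn : j + n = t + r (L k) + 1 := by
            rcases Nat.lt_or_ge (t + r (L k)) (j + n) with h | h
            · omega
            · exact absurd ⟨j, by omega, by omega, hjM, hjp⟩ hbt
          have hjt : t + (r (L k) + 1 - n) = j := by
            have := hLn k
            have := hrge (L k)
            omega
          have hmem : p t ∈ SF x mu (p j') n j' t (L (k + 1)) := by
            rw [mem_SF]
            refine ⟨r (L k) + 1 - n, ?_, ?_, ?_⟩
            · rw [hLs]
              have := hLn k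
              have := hrge (L k)
              omega
            · intro τ hτ
              rw [hjt]
              exact hjM τ hτ
            · rw [← runSeg_p x mu p hp t _, hjt]
              exact hjp
          obtain ⟨jv, hv1, hv2, hvM⟩ := hwin (L k) a t
          have hnm : runSeg x mu t (jv - t) (p t) ∉ SF x mu (p j') n j' a (L k) := by
            intro hin
            have hjv : jv = t + (jv - t) := by omega
            have hpjv : p jv = runSeg x mu t (jv - t) (p t) := by
              have h5 := runSeg_p x mu p hp t (jv - t)
              rwa [← hjv] at h5
            rw [← hpjv] at hin
            obtain ⟨jj, hjj1, hjj2, hjjM, hjjp⟩ :=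
              realize x mu p hp n j' (fun τ hτ => hvM τ hτ) hin
            exact hbt ⟨jj, by omega, by omega, hjjM, hjjp⟩
          have hpull : ∀ q', runSeg x mu t (jv - t) q' ∈ SF x mu (p j') n j' a (L k)
              → q' ∈ SF x mu (p j') n j' t (L (k + 1)) := by
            intro q' hq
            refine pull x mu (p j') n j' (fun τ₂ hτ₂ => ?_) (by rw [hLs]; omega) hq
            have he : t + (jv - t) + τ₂ = jv + τ₂ := by omega
            rw [he]
            exact hvM τ₂ hτ₂
          have := card_grow (runSeg_bij x mu hrev t (jv - t)) hpull hmem hnm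
          omega
        · -- backward boundary: good at t, bad at t+1
          obtain ⟨j, hj1, hj2, hjM, hjp⟩ := hgt
          have hjt : j = t := by
            rcases Nat.lt_or_ge j (t + 1) with h | h
            · omega
            · exact absurd ⟨j, h, by omega, hjM, hjp⟩ hbt1
          subst hjt
          have hmem : p j ∈ SF x mu (p j') n j' j (L (k + 1)) := by
            rw [mem_SF]
            refine ⟨0, ?_, fun τ hτ => by rw [Nat.add_zero]; exact hjM τ hτ, hjp⟩
            rw [hLs]
            have := hLn k
            have := hrge (L k)
            omega
          obtain ⟨jv, hv1, hv2, hvM⟩ := hwin (L k) a (j + 1)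
          have hnm : runSeg x mu j (jv - j) (p j) ∉ SF x mu (p j') n j' a (L k) := by
            intro hin
            have hjv : jv = j + (jv - j) := by omega
            have hpjv : p jv = runSeg x mu j (jv - j) (p j) := by
              have h5 := runSeg_p x mu p hp j (jv - j)
              rwa [← hjv] at h5
            rw [← hpjv] at hin
            obtain ⟨jj, hjj1, hjj2, hjjM, hjjp⟩ :=
              realize x mu p hp n j' (fun τ hτ => hvM τ hτ) hin
            exact hbt1 ⟨jj, by omega, by omega, hjjM, hjjp⟩
          have hpull : ∀ q', runSeg x mu j (jv - j) q' ∈ SF x mu (p j') n j' a (L k)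
              → q' ∈ SF x mu (p j') n j' j (L (k + 1)) := by
            intro q' hq
            refine pull x mu (p j') n j' (fun τ₂ hτ₂ => ?_) (by rw [hLs]; omega) hq
            have he : j + (jv - j) + τ₂ = jv + τ₂ := by omega
            rw [he]
            exact hvM τ₂ hτ₂
          have := card_grow (runSeg_bij x mu hrev j (jv - j)) hpull hmem hnm
          omega
  rcases claim (m - 1) with ⟨k', hk', hall⟩ | ⟨a, hcard⟩
  · obtain ⟨j, h1, h2, h3, h4⟩ := hall i
    refine ⟨j, h1, ?_, h3, h4⟩
    have := hrmono _ _ (hLmono hk')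
    rw [hbound]
    omega
  · have huniv : SF x mu (p j') n j' a (L (m - 1)) = Finset.univ := by
      refine Finset.eq_univ_of_card _ ?_
      have h1 := Finset.card_le_univ (SF x mu (p j') n j' a (L (m - 1)))
      omega
    obtain ⟨jv, hv1, hv2, hvM⟩ := hwin (L (m - 1)) a i
    have hmem : p jv ∈ SF x mu (p j') n j' a (L (m - 1)) := by
      rw [huniv]; exact Finset.mem_univ _
    obtain ⟨jj, h1, h2, h3, h4⟩ :=
      realize x mu p hp n j' (fun τ hτ => hvM τ hτ) hmem
    refine ⟨jj, by omega, ?_, h3, h4⟩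
    rw [hbound]
    omega

end RevTransAux

open RevTransAux in
/-- The image of an almost periodic sequence under a reversible uniform
finite-state transducer with `m` states is almost periodic; moreover every
length-`n` factor of the image occurring infinitely often occurs in every
window of length `g^[m] n - 1`, where `g n = r_x n + 1`. -/
theorem reversible_transducer_almostPeriodic {A B Q : Type*} [Fintype Q]
    (m : ℕ) (hm : Fintype.card Q = m)
    (lam : Q → A → B) (mu : Q → A → Q) (q0 : Q)
    (hrev : ∀ a : A, Function.Bijective (fun q => mu q a))
    (x : ℕ → A) (hx : AlmostPeriodic x)
    (r : ℕ → ℕ)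
    (hr : ∀ n : ℕ, IsLeast {l : ℕ | ∀ u : List A, u.length = n →
      (∃ i, occursAt x u i) →
      ∀ i : ℕ, ∃ j : ℕ, i ≤ j ∧ j + n ≤ i + l ∧ occursAt x u j} (r n))
    (p : ℕ → Q) (hp0 : p 0 = q0) (hp : ∀ n, p (n + 1) = mu (p n) (x n))
    (y : ℕ → B) (hy : ∀ n, y n = lam (p n) (x n)) :
    AlmostPeriodic y ∧
      ∀ (n : ℕ) (u : List B), u.length = n →
        (∀ N : ℕ, ∃ j : ℕ, N ≤ j ∧ occursAt y u j) →
        ∀ i : ℕ, ∃ j : ℕ, i ≤ j ∧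
          j + n ≤ i + ((fun t => r t + 1)^[m] n - 1) ∧ occursAt y u j := by
  -- window property of x, derived from hr
  have hwin : ∀ len a i, ∃ jv, i ≤ jv ∧ jv + len ≤ i + r len ∧
      ∀ τ, τ < len → x (jv + τ) = x (a + τ) := by
    intro len a i
    have hleast := (hr len).1
    have hocc : occursAt x (List.ofFn fun τ : Fin len => x (a + (τ : ℕ))) a := by
      intro jf
      rw [List.get_ofFn]
      simp
    obtain ⟨j, h1, h2, h3⟩ := hleast (List.ofFn fun τ : Fin len => x (a + (τ : ℕ)))
      (by simp) ⟨a, hocc⟩ i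
    refine ⟨j, h1, h2, ?_⟩
    intro τ hτ
    have hτ' : τ < (List.ofFn fun τ : Fin len => x (a + (τ : ℕ))).length := by
      simpa using hτ
    have := h3 ⟨τ, hτ'⟩
    rw [List.get_ofFn] at this
    simpa using this
  have hrmono : ∀ b c, b ≤ c → r b ≤ r c := by
    intro b c hbc
    refine (hr b).2 ?_
    intro u hu hocc i
    obtain ⟨i₀, hocc₀⟩ := hocc
    obtain ⟨jv, h1, h2, h3⟩ := hwin c i₀ i
    refine ⟨jv, h1, by omega, ?_⟩
    intro jf
    have hjf : (jf : ℕ) < b := by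
      have := jf.2
      omega
    rw [h3 _ (by omega)]
    exact hocc₀ jf
  have htoY : ∀ (u : List B) (i₀ j : ℕ), occursAt y u i₀ →
      (∀ τ, τ < u.length → x (j + τ) = x (i₀ + τ)) → p j = p i₀ →
      occursAt y u j := by
    intro u i₀ j hocc hM hpj jf
    have hτ := jf.2
    have hpp : p (j + (jf : ℕ)) = p (i₀ + (jf : ℕ)) := by
      rw [runSeg_p x mu p hp j (jf : ℕ), runSeg_p x mu p hp i₀ (jf : ℕ), hpj,
        runSeg_congr x mu (fun τ hτ' => hM τ (lt_trans hτ' hτ)) (p i₀)]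
    rw [hy, hpp, hM _ hτ, ← hy]
    exact hocc jf
  constructor
  · rintro u ⟨i₀, hocc⟩
    by_cases h0 : u.length = 0
    · exact ⟨1, fun i => ⟨i, le_refl _, by omega,
        fun jf => absurd jf.2 (by omega)⟩⟩
    · refine ⟨(fun t => r t + 1)^[m] u.length - 1, fun i => ?_⟩
      obtain ⟨j, h1, h2, h3, h4⟩ := main_aux hm x mu hrev r hwin hrmono p hp
        u.length (by omega) i₀ i
      exact ⟨j, h1, h2, htoY u i₀ j hocc h3 h4⟩
  · rintro n u hlen hio i
    by_cases h0 : n = 0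
    · subst h0
      exact ⟨i, le_refl _, by omega, fun jf => absurd jf.2 (by omega)⟩
    · obtain ⟨j', hj'N, hocc⟩ := hio 0
      obtain ⟨j, h1, h2, h3, h4⟩ := main_aux hm x mu hrev r hwin hrmono p hp
        n (by omega) j' i
      exact ⟨j, h1, h2, htoY u j' j hocc (fun τ hτ => h3 τ (by omega)) h4⟩
end

section
/- The product of an almost periodic sequence with a periodic sequence is almost periodic: if x is almost periodic over A and y is periodic over B, then the sequence (x × y)(i) = (x(i), y(i)) over A × B is almost periodic. -/
open Classical in
/-- Crux: an almost periodic sequence has bounded-gap occurrences of any of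
its factors within a fixed residue class mod `T` (the class of a known
occurrence). -/
lemma crux {A : Type*} (x : ℕ → A) (hx : AlmostPeriodic x)
    (v : List A) (p : ℕ) (hp : occursAt x v p) (T : ℕ) (hT : 1 ≤ T) :
    ∃ L, ∀ i, ∃ j, i ≤ j ∧ p ≤ j ∧ j % T = p % T ∧
      j + v.length ≤ i + L ∧ occursAt x v j := by
  haveI : NeZero T := ⟨by omega⟩
  set n := v.length with hn
  -- the set of residues of offsets (from p) of occurrences of v
  set R : Finset (ZMod T) :=
    Finset.univ.filter (fun r => ∃ s : ℕ, ((s : ZMod T) = r ∧ occursAt x v (p + s))) with hR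
  have hmemR : ∀ r : ZMod T, r ∈ R ↔ ∃ s : ℕ, ((s : ZMod T) = r ∧ occursAt x v (p + s)) := by
    intro r
    simp [hR]
  have h0R : (0 : ZMod T) ∈ R := by
    rw [hmemR]
    exact ⟨0, by simp, by simpa using hp⟩
  -- bounded witnesses
  set f : ZMod T → ℕ := fun r =>
    if h : ∃ s : ℕ, ((s : ZMod T) = r ∧ occursAt x v (p + s)) then h.choose else 0 with hf
  set m₀ : ℕ := Finset.univ.sup f with hm₀
  have hwit : ∀ r ∈ R, ∃ s ≤ m₀, (s : ZMod T) = r ∧ occursAt x v (p + s) := by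
    intro r hr
    rw [hmemR] at hr
    refine ⟨hr.choose, ?_, hr.choose_spec⟩
    have : f r = hr.choose := by rw [hf]; simp only [dif_pos hr]
    calc hr.choose = f r := this.symm
      _ ≤ m₀ := Finset.le_sup (Finset.mem_univ r)
  -- the long word W
  set W : List A := (List.range (m₀ + n)).map (fun k => x (p + k)) with hWdef
  have hWlen : W.length = m₀ + n := by simp [hWdef]
  have hWocc : occursAt x W p := by
    intro j
    simp [hWdef, List.get_eq_getElem]
  obtain ⟨LW, hLW⟩ := hx W ⟨p, hWocc⟩
  refine ⟨p + LW, fun i => ?_⟩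
  obtain ⟨q, hq1, hq2, hq3⟩ := hLW (max i p)
  have hpq : p ≤ q := le_trans (le_max_right _ _) hq1
  obtain ⟨d, hd⟩ : ∃ d, q = p + d := ⟨q - p, by omega⟩
  -- claim A: occurrences of v inside W transfer to the occurrence of W at q
  have claimA : ∀ s ≤ m₀, occursAt x v (p + s) → occursAt x v (q + s) := by
    intro s hs hocc j
    have hj : (j : ℕ) < n := j.isLt
    have hlt : s + (j : ℕ) < W.length := by omega
    have e1 : x (q + (s + (j : ℕ))) = W.get ⟨s + (j : ℕ), hlt⟩ := hq3 ⟨s + (j : ℕ), hlt⟩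
    have e2 : W.get ⟨s + (j : ℕ), hlt⟩ = x (p + (s + (j : ℕ))) := by
      simp [hWdef, List.get_eq_getElem]
    have e3 : x (p + s + (j : ℕ)) = v.get j := hocc j
    have h4 : q + s + (j : ℕ) = q + (s + (j : ℕ)) := by omega
    have h5 : p + (s + (j : ℕ)) = p + s + (j : ℕ) := by omega
    rw [h4, e1, e2, h5, e3]
  -- residue shift: R + d ⊆ R
  have hshift : ∀ r ∈ R, r + (d : ZMod T) ∈ R := by
    intro r hr
    obtain ⟨s, hs, hsr, hocc⟩ := hwit r hr
    rw [hmemR]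
    refine ⟨d + s, ?_, ?_⟩
    · push_cast
      rw [hsr]; ring
    · have := claimA s hs hocc
      rw [hd] at this
      have : p + (d + s) = p + d + s := by omega
      rw [this]
      have h2 := claimA s hs hocc
      rwa [hd] at h2
  -- hence R + d = R, and since 0 ∈ R, -d ∈ R
  have himg : Finset.image (· + (d : ZMod T)) R = R := by
    apply Finset.eq_of_subset_of_card_le
    · intro r hr
      obtain ⟨r', hr', rfl⟩ := Finset.mem_image.mp hr
      exact hshift r' hr'
    · rw [Finset.card_image_of_injective _ (add_left_injective _)]
  have hnegd : (-(d : ZMod T)) ∈ R := by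
    have h0 : (0 : ZMod T) ∈ Finset.image (· + (d : ZMod T)) R := by
      rw [himg]; exact h0R
    obtain ⟨r, hr, hre⟩ := Finset.mem_image.mp h0
    have : r = -(d : ZMod T) := by
      have : r + (d : ZMod T) = 0 := hre
      linear_combination this
    rwa [this] at hr
  obtain ⟨s, hs, hsr, hocc⟩ := hwit _ hnegd
  refine ⟨q + s, ?_, by omega, ?_, ?_, claimA s hs hocc⟩
  · calc i ≤ max i p := le_max_left _ _
      _ ≤ q := hq1
      _ ≤ q + s := Nat.le_add_right _ _
  · have hcast : ((q + s : ℕ) : ZMod T) = ((p : ℕ) : ZMod T) := by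
      rw [hd]
      push_cast
      rw [hsr]
      ring
    exact (ZMod.natCast_eq_natCast_iff _ _ _).mp hcast
  · have := hq2
    rw [hWlen] at this
    have hmax : max i p ≤ i + p := by omega
    omega

/-- iterated periodicity -/
lemma per_iter {B : Type*} (y : ℕ → B) (T : ℕ) (hy : ∀ i, y (i + T) = y i) :
    ∀ m i, y (i + m * T) = y i := by
  intro m
  induction m with
  | zero => simp
  | succ m ih =>
    intro i
    have : i + (m + 1) * T = (i + m * T) + T := by ring
    rw [this, hy, ih]

/-- The product of an almost periodic sequence with a periodic sequence is
almost periodic. -/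
theorem almostPeriodic_prod_periodic {A B : Type*}
    (x : ℕ → A) (hx : AlmostPeriodic x)
    (y : ℕ → B) (T : ℕ) (hT : 1 ≤ T) (hy : ∀ i, y (i + T) = y i) :
    AlmostPeriodic (fun i => (x i, y i)) := by
  rintro u ⟨p, hp⟩
  set v : List A := u.map Prod.fst with hv
  have hvlen : v.length = u.length := by simp [hv]
  have hvocc : occursAt x v p := by
    intro j
    have hj : (j : ℕ) < u.length := by omega
    have h := hp ⟨j, hj⟩
    have h2 : v.get j = (u.get ⟨j, hj⟩).1 := by
      simp [hv, List.get_eq_getElem]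
    rw [h2, ← h]
  obtain ⟨L, hL⟩ := crux x hx v p hvocc T hT
  refine ⟨L, fun i => ?_⟩
  obtain ⟨j, hij, hpj, hmod, hlen, hocc⟩ := hL i
  refine ⟨j, hij, by omega, ?_⟩
  -- y agrees: j = p + m*T
  have hdvd : T ∣ j - p := (Nat.modEq_iff_dvd' hpj).mp (Nat.ModEq.symm hmod)
  obtain ⟨m, hm⟩ := hdvd
  rw [Nat.mul_comm] at hm
  have hjp : j = p + m * T := by omega
  intro k
  have hk : (k : ℕ) < u.length := k.isLt
  have hkv : (k : ℕ) < v.length := by omega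
  have hxpart : x (j + (k : ℕ)) = (u.get k).1 := by
    have h1 := hocc ⟨k, hkv⟩
    have h2 : v.get ⟨(k : ℕ), hkv⟩ = (u.get k).1 := by
      simp [hv, List.get_eq_getElem]
    rw [h1, h2]
  have hypart : y (j + (k : ℕ)) = (u.get k).2 := by
    have h1 : y (j + (k : ℕ)) = y (p + (k : ℕ)) := by
      have : j + (k : ℕ) = (p + (k : ℕ)) + m * T := by omega
      rw [this, per_iter y T hy]
    have h2 := hp k
    simp only at h2
    rw [h1, ← h2]
  show (x (j + (k : ℕ)), y (j + (k : ℕ))) = u.get k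
  rw [hxpart, hypart]
end

section
/- The product of a precisely almost periodic sequence with a periodic sequence is precisely almost periodic. -/
/-- A sequence is precisely almost periodic if every word occurring in it
occurs along some arithmetic progression. -/
def PreciselyAlmostPeriodic {A : Type*} (x : ℕ → A) : Prop :=
  ∀ u : List A, (∃ i, occursAt x u i) →
    ∃ a d : ℕ, 1 ≤ d ∧ ∀ i : ℕ, occursAt x u (a + i * d)

namespace PAPProd

/-- The length-`m` prefix of `x` occurs at position `q`. -/
def Occ {A : Type*} (x : ℕ → A) (m q : ℕ) : Prop := ∀ s < m, x (q + s) = x s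

lemma occ_mono {A : Type*} {x : ℕ → A} {m m' q : ℕ} (h : m' ≤ m) (hq : Occ x m q) :
    Occ x m' q := fun s hs => hq s (lt_of_lt_of_le hs h)

lemma occ_compose {A : Type*} {x : ℕ → A} {m m' p q : ℕ} (hp : Occ x m p) (hq : Occ x m' q)
    (hle : q + m' ≤ m) : Occ x m' (p + q) := by
  intro s hs
  have h1 : q + s < m := by omega
  have h2 := hp (q + s) h1
  rw [← add_assoc] at h2
  rw [h2, hq s hs]

lemma exists_solve (C e T : ℕ) (hT : 1 ≤ T) (hg : Nat.gcd e T ∣ C) :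
    ∃ i₀ : ℕ, T ∣ C + i₀ * e := by
  obtain ⟨C', hC'⟩ := hg
  have hbez : (Nat.gcd e T : ℤ) = e * Nat.gcdA e T + T * Nat.gcdB e T := Nat.gcd_eq_gcd_ab e T
  set z : ℤ := (-(C' : ℤ)) * Nat.gcdA e T with hz
  have key : (T : ℤ) ∣ (C : ℤ) + z * e := by
    have hCeq : (C : ℤ) = (Nat.gcd e T : ℤ) * (C' : ℤ) := by exact_mod_cast hC'
    refine ⟨(C' : ℤ) * Nat.gcdB e T, ?_⟩
    rw [hCeq, hbez]; ring
  have hTpos : (0 : ℤ) < (T : ℤ) := by exact_mod_cast hT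
  set w : ℤ := z % (T : ℤ) with hw
  have hnn : 0 ≤ w := Int.emod_nonneg z (by omega)
  have hsub : z - w = (T : ℤ) * (z / (T : ℤ)) := by
    have := Int.mul_ediv_add_emod z (T : ℤ)
    omega
  have hdvd2 : (T : ℤ) ∣ (C : ℤ) + w * e := by
    have : (C : ℤ) + w * e = ((C : ℤ) + z * e) - (z - w) * e := by ring
    rw [this, hsub]
    exact dvd_sub key ⟨(z / (T:ℤ)) * e, by ring⟩
  refine ⟨w.toNat, ?_⟩
  have : ((C + w.toNat * e : ℕ) : ℤ) = (C : ℤ) + w * e := by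
    push_cast [Int.toNat_of_nonneg hnn]; ring
  exact_mod_cast this ▸ hdvd2

lemma reduced {A : Type*} (x : ℕ → A) (T : ℕ) (hT : 1 ≤ T)
    (H : ∀ m : ℕ, ∃ be : ℕ × ℕ, 1 ≤ be.2 ∧ ∀ i, Occ x m (be.1 + i * be.2)) (m : ℕ) :
    ∃ a d : ℕ, 1 ≤ d ∧ ∀ i : ℕ, Occ x m (a + i * d) ∧ T ∣ (a + i * d) := by
  classical
  -- choice functions giving, for each prefix length, an AP of occurrences
  let B : ℕ → ℕ := fun L => (H L).choose.1
  let E : ℕ → ℕ := fun L => (H L).choose.2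
  have hE : ∀ L, 1 ≤ E L := fun L => (H L).choose_spec.1
  have hBE : ∀ L i, Occ x L (B L + i * E L) := fun L => (H L).choose_spec.2
  -- the chain of prefix lengths
  let Lf : ℕ → ℕ := fun j => Nat.rec m (fun _ L => B L + T * E L + L) j
  have hLf0 : Lf 0 = m := rfl
  have hLfs : ∀ j, Lf (j + 1) = B (Lf j) + T * E (Lf j) + Lf j := fun j => rfl
  set β : ℕ → ℕ := fun j => B (Lf j) with hβ
  set ε : ℕ → ℕ := fun j => E (Lf j) with hε
  -- descending one level of the chain
  have desc : ∀ j p, Occ x (Lf (j + 1)) p → Occ x (Lf j) (p + β j) := by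
    intro j p hp
    have h0 : Occ x (Lf j) (β j) := by simpa using hBE (Lf j) 0
    refine occ_compose hp h0 ?_
    rw [hLfs j]
    have hb : β j = B (Lf j) := rfl
    omega
  have lfmono : ∀ j, Lf j ≤ Lf (j + 1) := by
    intro j; rw [hLfs j]; omega
  -- composing occurrences along subsets of levels
  have subsum : ∀ J (S : Finset ℕ), S ⊆ Finset.range J → ∀ p, Occ x (Lf J) p →
      Occ x m (p + ∑ j ∈ S, β j) := by
    intro J
    induction J with
    | zero =>
      intro S hS p hp
      have hSe : S = ∅ := Finset.subset_empty.mp (by simpa using hS)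
      simpa [hSe] using (show Occ x m p from hp)
    | succ J ih =>
      intro S hS p hp
      by_cases hJ : J ∈ S
      · have hS' : S.erase J ⊆ Finset.range J := by
          intro a ha
          have h1 := Finset.mem_of_mem_erase ha
          have h2 := Finset.ne_of_mem_erase ha
          have h3 := hS h1
          simp only [Finset.mem_range] at h3 ⊢
          omega
        have h1 : Occ x (Lf J) (p + β J) := desc J p hp
        have h2 := ih (S.erase J) hS' (p + β J) h1
        have hsum : ∑ j ∈ S, β j = β J + ∑ j ∈ S.erase J, β j :=
          (Finset.add_sum_erase _ _ hJ).symm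
        rw [hsum, ← add_assoc]
        exact h2
      · have hS' : S ⊆ Finset.range J := by
          intro a ha
          have h1 : a < J + 1 := Finset.mem_range.mp (hS ha)
          have h2 : a ≠ J := fun h => hJ (h ▸ ha)
          exact Finset.mem_range.mpr (by omega)
        exact ih S hS' p (occ_mono (lfmono J) hp)
  -- pigeonhole: a gcd value attained at least T+1 times
  set G : ℕ → ℕ := fun j => Nat.gcd (ε j) T with hG
  have hGmem : ∀ a ∈ Finset.range (T * T + 1), G a ∈ Finset.Icc 1 T := by
    intro a _
    refine Finset.mem_Icc.mpr ⟨Nat.gcd_pos_of_pos_right _ (by omega), Nat.gcd_le_right _ (by omega)⟩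
  have hcard : (Finset.Icc 1 T).card * T < (Finset.range (T * T + 1)).card := by
    simp [Nat.card_Icc]
  obtain ⟨g, hgmem, hgcount⟩ :=
    Finset.exists_lt_card_fiber_of_mul_lt_card_of_maps_to hGmem hcard
  obtain ⟨hg1, hgT⟩ := Finset.mem_Icc.mp hgmem
  set M : Finset ℕ := (Finset.range (T * T + 1)).filter (fun j => G j = g) with hM
  have hMcard : T < M.card := hgcount
  haveI : NeZero g := ⟨by omega⟩
  -- strictly monotone enumeration of M
  set ψ0 : Fin M.card ↪o ℕ := M.orderEmbOfFin rfl with hψ0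
  set ψ : ℕ → ℕ := fun l => if h : l < M.card then ψ0 ⟨l, h⟩ else 0 with hψ
  have hψmem : ∀ l (h : l < M.card), ψ l ∈ M := by
    intro l h
    simp only [hψ, dif_pos h]
    exact Finset.orderEmbOfFin_mem M rfl ⟨l, h⟩
  have hψmono : ∀ {l1 l2 : ℕ}, l1 < l2 → l2 < M.card → ψ l1 < ψ l2 := by
    intro l1 l2 h12 h2
    have h1 : l1 < M.card := lt_trans h12 h2
    simp only [hψ, dif_pos h1, dif_pos h2]
    exact ψ0.strictMono (by exact h12)
  -- prefix sums mod g collide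
  set σ : Fin (g + 1) → ZMod g := fun k => ((∑ l ∈ Finset.range (k : ℕ), β (ψ l) : ℕ) : ZMod g)
    with hσ
  obtain ⟨k1, k2, hk12ne, hk12eq⟩ :=
    Fintype.exists_ne_map_eq_of_card_lt σ (by simp [ZMod.card g])
  wlog hlt : (k1 : ℕ) < (k2 : ℕ) generalizing k1 k2
  · exact this k2 k1 hk12ne.symm hk12eq.symm
      (by rcases Nat.lt_or_ge (k1 : ℕ) (k2 : ℕ) with h | h
          · omega
          · rcases Nat.eq_or_lt_of_le h with h' | h'
            · exact absurd (Fin.ext h'.symm) hk12ne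
            · omega)
  -- the block sum divisible by g
  have hsplit : ∑ l ∈ Finset.range (k2 : ℕ), β (ψ l)
      = (∑ l ∈ Finset.range (k1 : ℕ), β (ψ l)) + ∑ l ∈ Finset.Ico (k1 : ℕ) (k2 : ℕ), β (ψ l) := by
    rw [Finset.range_eq_Ico, Finset.range_eq_Ico]
    exact (Finset.sum_Ico_consecutive _ (Nat.zero_le _) (le_of_lt hlt)).symm
  have hblock0 : ((∑ l ∈ Finset.Ico (k1 : ℕ) (k2 : ℕ), β (ψ l) : ℕ) : ZMod g) = 0 := by
    have h1 : σ k1 = σ k2 := hk12eq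
    simp only [hσ] at h1
    rw [hsplit] at h1
    push_cast at h1 ⊢
    linear_combination -h1
  have hblockdvd : g ∣ ∑ l ∈ Finset.Ico (k1 : ℕ) (k2 : ℕ), β (ψ l) :=
    (ZMod.natCast_eq_zero_iff _ g).mp hblock0
  -- choose the top level J and the subset S
  have hk2T : (k2 : ℕ) ≤ T := by have := k2.isLt; omega
  have hk2card : (k2 : ℕ) - 1 < M.card := by omega
  set J : ℕ := ψ ((k2 : ℕ) - 1) with hJdef
  set S : Finset ℕ := (Finset.Ico (k1 : ℕ) ((k2 : ℕ) - 1)).image ψ with hS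
  have hk1le : (k1 : ℕ) ≤ (k2 : ℕ) - 1 := by omega
  have htop : ∑ l ∈ Finset.Ico (k1 : ℕ) (k2 : ℕ), β (ψ l)
      = (∑ l ∈ Finset.Ico (k1 : ℕ) ((k2 : ℕ) - 1), β (ψ l)) + β J := by
    have h1 : Finset.Ico (k1 : ℕ) (k2 : ℕ) = Finset.Ico (k1 : ℕ) (((k2 : ℕ) - 1) + 1) := by
      congr 1; omega
    rw [h1]
    exact Finset.sum_Ico_succ_top hk1le _
  have hSsub : S ⊆ Finset.range J := by
    intro a ha
    obtain ⟨l, hl, rfl⟩ := Finset.mem_image.mp ha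
    have hl' := Finset.mem_Ico.mp hl
    exact Finset.mem_range.mpr (hψmono (by omega) hk2card)
  have hSsum : ∑ j ∈ S, β j = ∑ l ∈ Finset.Ico (k1 : ℕ) ((k2 : ℕ) - 1), β (ψ l) := by
    refine Finset.sum_image ?_
    intro a ha b hb hab
    have ha' := Finset.mem_Ico.mp ha
    have hb' := Finset.mem_Ico.mp hb
    by_contra hne
    rcases Nat.lt_or_ge a b with h | h
    · exact absurd hab (Nat.ne_of_lt (hψmono h (by omega)))
    · have h' : b < a := by omega
      exact absurd hab.symm (Nat.ne_of_lt (hψmono h' (by omega)))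
  have hGJ : Nat.gcd (ε J) T = g := by
    have := hψmem ((k2 : ℕ) - 1) hk2card
    rw [hM, Finset.mem_filter] at this
    exact this.2
  -- solve for the phase
  set C : ℕ := β J + ∑ j ∈ S, β j with hC
  have hgC : Nat.gcd (ε J) T ∣ C := by
    rw [hGJ, hC, hSsum]
    have : β J + ∑ l ∈ Finset.Ico (k1 : ℕ) ((k2 : ℕ) - 1), β (ψ l)
        = ∑ l ∈ Finset.Ico (k1 : ℕ) (k2 : ℕ), β (ψ l) := by rw [htop]; ring
    rw [this]
    exact hblockdvd
  obtain ⟨i₀, hi₀⟩ := exists_solve C (ε J) T hT hgC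
  refine ⟨C + i₀ * ε J, T * ε J, ?_, ?_⟩
  · have := hE (Lf J); exact Nat.one_le_iff_ne_zero.mpr (by positivity)
  · intro i
    constructor
    · have hocc : Occ x (Lf J) (β J + (i₀ + i * T) * ε J) := hBE (Lf J) (i₀ + i * T)
      have h2 := subsum J S hSsub _ hocc
      have heq : β J + (i₀ + i * T) * ε J + ∑ j ∈ S, β j
          = C + i₀ * ε J + i * (T * ε J) := by rw [hC]; ring
      rwa [heq] at h2
    · exact dvd_add hi₀ ⟨i * ε J, by ring⟩

end PAPProd

/-- The product of a precisely almost periodic sequence with a periodic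
sequence is precisely almost periodic. -/
theorem preciselyAlmostPeriodic_prod_periodic {A B : Type*}
    (x : ℕ → A) (hx : PreciselyAlmostPeriodic x)
    (y : ℕ → B) (T : ℕ) (hT : 1 ≤ T) (hy : ∀ i, y (i + T) = y i) :
    PreciselyAlmostPeriodic (fun i => (x i, y i)) := by
  classical
  intro u hu
  obtain ⟨i₀, hocc⟩ := hu
  -- periodicity of y in multiples of T
  have hyk : ∀ k s, y (s + k * T) = y s := by
    intro k
    induction k with
    | zero => intro s; simp
    | succ k ih =>
      intro s
      have h1 : s + (k + 1) * T = (s + k * T) + T := by ring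
      rw [h1, hy, ih]
  -- every prefix of x occurs along an AP
  have H : ∀ m : ℕ, ∃ be : ℕ × ℕ, 1 ≤ be.2 ∧ ∀ i, PAPProd.Occ x m (be.1 + i * be.2) := by
    intro m
    have hpocc : occursAt x (List.ofFn (fun j : Fin m => x j)) 0 := by
      intro j
      simp [List.get_ofFn]
    obtain ⟨a, d, hd, hap⟩ := hx _ ⟨0, hpocc⟩
    refine ⟨(a, d), hd, ?_⟩
    intro i s hs
    have hs' : s < (List.ofFn (fun j : Fin m => x j)).length := by simpa using hs
    have h2 := hap i ⟨s, hs'⟩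
    simpa [List.get_ofFn] using h2
  obtain ⟨a, d, hd, hAD⟩ := PAPProd.reduced x T hT H (i₀ + u.length)
  refine ⟨a + i₀, d, hd, ?_⟩
  intro i j
  obtain ⟨hOcc, hDvd⟩ := hAD i
  obtain ⟨k, hk⟩ := hDvd
  have hjlt : (j : ℕ) < u.length := j.isLt
  have hxpart : x (a + i * d + (i₀ + (j : ℕ))) = x (i₀ + (j : ℕ)) :=
    hOcc (i₀ + (j : ℕ)) (by omega)
  have hypart : y (a + i * d + (i₀ + (j : ℕ))) = y (i₀ + (j : ℕ)) := by
    have harg : a + i * d + (i₀ + (j : ℕ)) = (i₀ + (j : ℕ)) + k * T := by rw [hk]; ring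
    rw [harg, hyk]
  have harg2 : a + i₀ + i * d + (j : ℕ) = a + i * d + (i₀ + (j : ℕ)) := by omega
  show (x (a + i₀ + i * d + (j : ℕ)), y (a + i₀ + i * d + (j : ℕ))) = u.get j
  rw [harg2, hxpart, hypart]
  exact hocc j
end

section
/- There exists an almost periodic binary sequence x such that for every n there is a prefix of x containing n more 0s than 1s, and for every n there is a prefix containing n more 1s than 0s. -/
/-- The length-`k` prefix of `x`. -/
def prefixWord (x : ℕ → Fin 2) (k : ℕ) : List (Fin 2) :=
  List.ofFn (fun j : Fin k => x (j : ℕ))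

namespace APX

def f : ℕ → ℕ
  | 0 => 0
  | (n+1) => f ((n+1)/4) + (if (n+1) % 4 = 0 then 0 else 1)
decreasing_by exact Nat.div_lt_self (Nat.succ_pos n) (by norm_num)

lemma f_step (q r : ℕ) (hr : r < 4) :
    f (4*q + r) = f q + (if r = 0 then 0 else 1) := by
  rcases Nat.eq_zero_or_pos (4*q + r) with h | h
  · have hq : q = 0 := by omega
    have hr0 : r = 0 := by omega
    subst hq; subst hr0; simp [f]
  · obtain ⟨m, hm⟩ := Nat.exists_eq_succ_of_ne_zero (n := 4*q + r) (by omega)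
    have h1 : (4*q + r)/4 = q := by omega
    have h2 : (4*q + r)%4 = r := by omega
    rw [hm, f, show m + 1 = 4*q + r from by omega, h1, h2]

lemma f_add : ∀ (k a b : ℕ), b < 4^k → f (4^k * a + b) = f a + f b
  | 0, a, b, hb => by
      have : b = 0 := by simpa using Nat.lt_one_iff.mp (by simpa using hb)
      subst this
      simp [f]
  | (k+1), a, b, hb => by
      have h4 : (4:ℕ)^(k+1) = 4^k * 4 := pow_succ 4 k
      have hb4 : b / 4 < 4^k := by omega
      have ha : 4^(k+1) * a = 4 * (4^k * a) := by rw [h4]; ring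
      have key : 4^(k+1) * a + b = 4 * (4^k * a + b/4) + b % 4 := by omega
      have hmod : b % 4 < 4 := Nat.mod_lt _ (by norm_num)
      rw [key, f_step _ _ hmod, f_add k a (b/4) hb4]
      have hb' : f b = f (b/4) + (if b % 4 = 0 then 0 else 1) := by
        conv_lhs => rw [show b = 4*(b/4) + b%4 from by omega]
        exact f_step _ _ hmod
      omega

open Fin.CommRing in
def x : ℕ → Fin 2 := fun i => (f i : Fin 2)

open Fin.CommRing in
lemma x_add {k a b : ℕ} (hb : b < 4^k) : x (4^k * a + b) = x a + x b := by
  unfold x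
  rw [f_add k a b hb]
  push_cast
  ring

open Fin.CommRing in
lemma x0 : x 0 = 0 := by simp [x, f]

open Fin.CommRing in
lemma x1 : x 1 = 1 := by
  have : f 1 = 1 := by have := f_step 0 1 (by norm_num); simpa [f] using this
  simp [x, this]

open Fin.CommRing in
lemma x2 : x 2 = 1 := by
  have : f 2 = 1 := by have := f_step 0 2 (by norm_num); simpa [f] using this
  simp [x, this]

open Fin.CommRing in
lemma x3 : x 3 = 1 := by
  have : f 3 = 1 := by have := f_step 0 3 (by norm_num); simpa [f] using this
  simp [x, this]

def sgn : Fin 2 → ℤ := fun v => 1 - 2*(v:ℤ)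

lemma sgn_add : ∀ u v : Fin 2, sgn (u + v) = sgn u * sgn v := by decide

lemma sgn_cases : ∀ v : Fin 2, sgn v = 1 ∨ sgn v = -1 := by decide

def D (a m : ℕ) : ℤ := ∑ j ∈ Finset.range m, sgn (x (a + j))

lemma D_succ (a m : ℕ) : D a (m+1) = D a m + sgn (x (a + m)) := by
  unfold D; rw [Finset.sum_range_succ]

lemma D_split (a m : ℕ) : ∀ n, D a (m + n) = D a m + D (a + m) n := by
  intro n
  induction n with
  | zero => simp [D]
  | succ n ih =>
      rw [show m + (n+1) = (m + n) + 1 from rfl, D_succ, ih, D_succ, add_assoc,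
        add_assoc]

lemma D_block (k a : ℕ) : D (4^k * a) (4^k) = sgn (x a) * D 0 (4^k) := by
  unfold D
  rw [Finset.mul_sum]
  refine Finset.sum_congr rfl fun j hj => ?_
  rw [Finset.mem_range] at hj
  rw [zero_add, x_add hj, sgn_add]

lemma D_pow (k : ℕ) : D 0 (4^k) = (-2)^k := by
  induction k with
  | zero => simp [D, sgn, x0]
  | succ k ih =>
      have h4 : (4:ℕ)^(k+1) = 4^k + (4^k + (4^k + 4^k)) := by ring
      rw [h4, D_split, D_split, D_split]
      have e1 : (0:ℕ) + 4^k = 4^k * 1 := by ring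
      have e2 : (0:ℕ) + 4^k + 4^k = 4^k * 2 := by ring
      have e3 : (0:ℕ) + 4^k + 4^k + 4^k = 4^k * 3 := by ring
      have b1 : D ((0:ℕ) + 4^k) (4^k) = sgn (x 1) * D 0 (4^k) := by
        rw [e1]; exact D_block k 1
      have b2 : D ((0:ℕ) + 4^k + 4^k) (4^k) = sgn (x 2) * D 0 (4^k) := by
        rw [e2]; exact D_block k 2
      have b3 : D ((0:ℕ) + 4^k + 4^k + 4^k) (4^k) = sgn (x 3) * D 0 (4^k) := by
        rw [e3]; exact D_block k 3
      rw [b1, b2, b3, x1, x2, x3, ih]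
      have hs : sgn 1 = -1 := by decide
      rw [hs]; ring

lemma two_cases : ∀ v : Fin 2, v = 0 ∨ v = 1 := by decide

end APX

open APX in
lemma count_eq (k : ℕ) :
    ((prefixWord x k).count 0 : ℤ) = ((prefixWord x k).count 1 : ℤ) + D 0 k := by
  induction k with
  | zero => simp [prefixWord, D]
  | succ k ih =>
      have hpre : prefixWord x (k+1) = (prefixWord x k) ++ [x k] := by
        rw [prefixWord, List.ofFn_succ', prefixWord]
        simp [List.concat_eq_append]
      rw [hpre, D_succ, zero_add]
      rcases two_cases (x k) with h | h <;>
        · simp only [List.count_append, h]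
          push_cast
          simp [sgn, h]
          omega

lemma ivt (g : ℕ → ℤ) (h0 : g 0 = 0) (hstep : ∀ k, g (k+1) ≤ g k + 1)
    (t : ℤ) (ht : 0 ≤ t) (K : ℕ) (hK : t ≤ g K) : ∃ k, g k = t := by
  induction K with
  | zero => exact ⟨0, by omega⟩
  | succ K ih =>
      by_cases h : t ≤ g K
      · exact ih h
      · exact ⟨K+1, by have := hstep K; omega⟩

open APX

lemma add11 : ∀ v : Fin 2, (1:Fin 2) + (1 + v) = v := by decide

lemma occ_shift (u : List (Fin 2)) (i n t : ℕ)
    (hn : i + u.length ≤ 4^n) (hu : occursAt x u i) :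
    ∃ j, t * 4^(n+1) ≤ j ∧ j + u.length ≤ t * 4^(n+1) + 2 * 4^n ∧
      occursAt x u j := by
  have hP : (4:ℕ)^(n+1) = 4 * 4^n := by ring
  rcases two_cases (x t) with h | h
  · refine ⟨t * 4^(n+1) + i, by omega, by omega, ?_⟩
    intro j
    have hj : (j:ℕ) < u.length := j.isLt
    have hb : i + (j:ℕ) < 4^(n+1) := by omega
    have e : t * 4^(n+1) + i + (j:ℕ) = 4^(n+1) * t + (i + (j:ℕ)) := by ring
    rw [e, x_add hb, h, zero_add]
    exact hu j
  · refine ⟨t * 4^(n+1) + 4^n + i, by omega, by omega, ?_⟩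
    intro j
    have hj : (j:ℕ) < u.length := j.isLt
    have hb : 4^n * 1 + (i + (j:ℕ)) < 4^(n+1) := by omega
    have hb' : i + (j:ℕ) < 4^n := by omega
    have e : t * 4^(n+1) + 4^n + i + (j:ℕ) =
        4^(n+1) * t + (4^n * 1 + (i + (j:ℕ))) := by ring
    rw [e, x_add hb, x_add hb', h, x1, hu j]
    exact add11 _

/-- There is an almost periodic binary sequence with prefixes having an excess
of `n` zeros over ones, and prefixes with an excess of `n` ones over zeros,
for every `n`. -/
theorem exists_almostPeriodic_alternating_excess :
    ∃ x : ℕ → Fin 2, AlmostPeriodic x ∧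
      (∀ n : ℕ, ∃ k : ℕ,
        (prefixWord x k).count 0 = (prefixWord x k).count 1 + n) ∧
      (∀ n : ℕ, ∃ k : ℕ,
        (prefixWord x k).count 1 = (prefixWord x k).count 0 + n) := by
  refine ⟨APX.x, ?_, ?_, ?_⟩
  · rintro u ⟨i, hi⟩
    set n := i + u.length with hn'
    have hn : i + u.length ≤ 4^n := (Nat.lt_pow_self (n := n) (by norm_num : 1 < 4)).le
    refine ⟨2 * 4^(n+1), ?_⟩
    intro i0
    obtain ⟨j, hj1, hj2, hj3⟩ := occ_shift u i n (i0 / 4^(n+1) + 1) hn hi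
    have hP : 0 < (4:ℕ)^(n+1) := pow_pos (by norm_num) _
    have hd := Nat.div_add_mod i0 (4^(n+1))
    have hm := Nat.mod_lt i0 hP
    have h44 : (4:ℕ)^(n+1) = 4 * 4^n := by ring
    have hq : (i0 / 4^(n+1) + 1) * 4^(n+1) =
        4^(n+1) * (i0 / 4^(n+1)) + 4^(n+1) := by ring
    rw [hq] at hj1
    exact ⟨j, by omega, by omega, hj3⟩
  · intro n
    have hstep : ∀ k, D 0 (k+1) ≤ D 0 k + 1 := by
      intro k; rw [D_succ]; rcases sgn_cases (x (0+k)) with h | h <;> omega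
    have h4n : (n:ℤ) ≤ 4^n := by
      exact_mod_cast (Nat.lt_pow_self (n := n) (by norm_num : 1 < 4)).le
    have hK : (n:ℤ) ≤ D 0 (4^(2*n)) := by
      rw [D_pow, pow_mul]; norm_num; exact h4n
    obtain ⟨k, hk⟩ := ivt (fun k => D 0 k) (by simp [D]) hstep n
      (by positivity) _ hK
    have hc := count_eq k
    rw [hk] at hc
    exact ⟨k, by exact_mod_cast hc⟩
  · intro n
    have hstep : ∀ k, -D 0 (k+1) ≤ -D 0 k + 1 := by
      intro k; rw [D_succ]; rcases sgn_cases (x (0+k)) with h | h <;> omega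
    have h4n : (n:ℤ) ≤ 4^n := by
      exact_mod_cast (Nat.lt_pow_self (n := n) (by norm_num : 1 < 4)).le
    have hK : (n:ℤ) ≤ -D 0 (4^(2*n+1)) := by
      rw [D_pow, pow_succ, pow_mul]; norm_num
      nlinarith [h4n, pow_pos (show (0:ℤ) < 4 by norm_num) n]
    obtain ⟨k, hk⟩ := ivt (fun k => -D 0 k) (by simp [D]) hstep n
      (by positivity) _ hK
    have hc := count_eq k
    have : ((prefixWord x k).count 1 : ℤ) = ((prefixWord x k).count 0 : ℤ) + n := by
      omega
    exact ⟨k, by exact_mod_cast this⟩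
end

section
/- Every Sturmian sequence (lower mechanical sequence with irrational slope) is almost periodic. -/
namespace SturmianAux


lemma fract_add_left (a b : ℝ) : Int.fract (a + b) = Int.fract (Int.fract a + b) := by
  have h : a + b = (Int.fract a + b) + (⌊a⌋ : ℝ) := by rw [Int.fract]; ring
  rw [h, Int.fract_add_intCast]

lemma fract_add_right (a b : ℝ) : Int.fract (a + b) = Int.fract (a + Int.fract b) := by
  rw [add_comm, fract_add_left, add_comm]

lemma floor_add_eq (α y : ℝ) : ⌊y + α⌋ - ⌊y⌋ = ⌊α + Int.fract y⌋ := by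
  have h : y + α = (⌊y⌋ : ℝ) + (α + Int.fract y) := by rw [Int.fract]; ring
  rw [h, Int.floor_intCast_add]; ring

/-- The word predicate: the length-`u.length` word read from angle `β`. -/
def P (α : ℝ) (u : List ℤ) (β : ℝ) : Prop :=
  ∀ j : Fin u.length, ⌊α + Int.fract ((j : ℝ) * α + β)⌋ = u.get j

lemma P_add_int (α : ℝ) (u : List ℤ) (β : ℝ) (m : ℤ) (hP : P α u β) : P α u (β + m) := by
  intro j
  have h : (j:ℝ) * α + (β + m) = ((j:ℝ) * α + β) + m := by ring
  rw [h, Int.fract_add_intCast]; exact hP j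

lemma occurs_iff (α ρ : ℝ) (u : List ℤ) (i : ℕ) :
    occursAt (fun n : ℕ => ⌊α * ((n : ℝ) + 1) + ρ⌋ - ⌊α * (n : ℝ) + ρ⌋) u i ↔
      P α u (Int.fract (α * i + ρ)) := by
  unfold occursAt P
  refine forall_congr' fun j => ?_
  have key : (⌊α * (((i + (j:ℕ) : ℕ) : ℝ) + 1) + ρ⌋ - ⌊α * ((i + (j:ℕ) : ℕ) : ℝ) + ρ⌋)
      = ⌊α + Int.fract ((j : ℝ) * α + Int.fract (α * i + ρ))⌋ := by
    have h1 : α * (((i + (j:ℕ) : ℕ) : ℝ) + 1) + ρ = (α * ((i + (j:ℕ) : ℕ) : ℝ) + ρ) + α := by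
      ring
    have h2 : α * ((i + (j:ℕ) : ℕ) : ℝ) + ρ = (j : ℝ) * α + (α * i + ρ) := by
      push_cast; ring
    rw [h1, floor_add_eq, h2, fract_add_right]
  simp only [key]






lemma stability (α : ℝ) (hα0 : 0 < α) (hα1 : α < 1) (u : List ℤ) (β : ℝ) (hP : P α u β) :
    ∃ ε > 0, ∀ δ : ℝ, 0 ≤ δ → δ < ε → P α u (β + δ) := by
  rcases Nat.eq_zero_or_pos u.length with h0 | hpos
  · exact ⟨1, one_pos, fun δ _ _ j => absurd j.2 (by omega)⟩
  have hne : Nonempty (Fin u.length) := ⟨⟨0, hpos⟩⟩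
  set t : Fin u.length → ℝ := fun j => Int.fract ((j:ℝ) * α + β) with ht
  set e : Fin u.length → ℝ := fun j => if t j < 1 - α then (1 - α) - t j else 1 - t j with he
  have hepos : ∀ j, 0 < e j := by
    intro j
    by_cases hj : t j < 1 - α
    · simp only [he, if_pos hj]; linarith
    · simp only [he, if_neg hj]
      have := Int.fract_lt_one ((j:ℝ) * α + β); simp only [ht]; linarith
  have hele : ∀ j, e j ≤ 1 - t j := by
    intro j
    by_cases hj : t j < 1 - α
    · simp only [he, if_pos hj]; linarith
    · simp only [he, if_neg hj]; linarith [le_refl (1 - t j)]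
  refine ⟨Finset.univ.inf' Finset.univ_nonempty e, ?_, ?_⟩
  · rw [gt_iff_lt, Finset.lt_inf'_iff]; exact fun j _ => hepos j
  · intro δ hδ0 hδε j
    have hεj : δ < e j := lt_of_lt_of_le hδε (Finset.inf'_le _ (Finset.mem_univ j))
    have ht0 : 0 ≤ t j := Int.fract_nonneg _
    have hfr : Int.fract ((j:ℝ) * α + (β + δ)) = t j + δ := by
      have h1 : (j:ℝ) * α + (β + δ) = ((j:ℝ) * α + β) + δ := by ring
      rw [h1, fract_add_left]
      exact Int.fract_eq_self.mpr ⟨by linarith, by have := hele j; linarith⟩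
    rw [hfr]
    have := hP j
    rw [show Int.fract ((j:ℝ) * α + β) = t j from rfl] at this
    rw [← this]
    by_cases hj : t j < 1 - α
    · have h1 : ⌊α + t j⌋ = 0 := Int.floor_eq_zero_iff.mpr ⟨by linarith, by linarith⟩
      have h2 : ⌊α + (t j + δ)⌋ = 0 := by
        refine Int.floor_eq_zero_iff.mpr ⟨by linarith, ?_⟩
        have : δ < (1 - α) - t j := by simpa [he, if_pos hj] using hεj
        linarith
      rw [h1, h2]
    · push_neg at hj
      have hlt1 : t j < 1 := Int.fract_lt_one _
      have h1 : ⌊α + t j⌋ = 1 := by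
        refine Int.floor_eq_iff.mpr ⟨?_, ?_⟩ <;> push_cast <;> linarith
      have h2 : ⌊α + (t j + δ)⌋ = 1 := by
        have hd : δ < 1 - t j := by simpa [he, if_neg (not_lt.mpr hj)] using hεj
        refine Int.floor_eq_iff.mpr ⟨?_, ?_⟩ <;> push_cast <;> linarith
      rw [h1, h2]




lemma exists_small_step (α : ℝ) (hirr : Irrational α) (ε : ℝ) (hε : 0 < ε) :
    ∃ m : ℕ, 0 < m ∧ (Int.fract ((m : ℝ) * α) < ε ∨ 1 - ε < Int.fract ((m : ℝ) * α)) := by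
  set N : ℕ := ⌈1 / ε⌉₊ + 1 with hN
  have hN0 : 0 < N := by omega
  have hNε : 1 / (N : ℝ) < ε := by
    rw [div_lt_iff₀ (by positivity)]
    have h1 : (1:ℝ) / ε ≤ ((⌈1 / ε⌉₊ : ℕ) : ℝ) := Nat.le_ceil _
    have h2 : ((⌈1 / ε⌉₊ : ℕ) : ℝ) < (N : ℝ) := by rw [hN]; push_cast; linarith
    calc (1:ℝ) = (1/ε) * ε := by field_simp
    _ < (N : ℝ) * ε := by apply mul_lt_mul_of_pos_right (lt_of_le_of_lt h1 h2) hε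
    _ = ε * (N : ℝ) := by ring
  have hcard : Fintype.card (Fin N) < Fintype.card (Fin (N + 1)) := by simp
  have hmem : ∀ m : Fin (N + 1), (⌊Int.fract ((m : ℝ) * α) * N⌋).toNat < N := by
    intro m
    have h1 : Int.fract ((m : ℝ) * α) * N < 1 * N := by
      apply mul_lt_mul_of_pos_right (Int.fract_lt_one _) (by exact_mod_cast hN0)
    have h2 : ⌊Int.fract ((m : ℝ) * α) * N⌋ < (N : ℤ) := by
      apply Int.floor_lt.mpr; rw [one_mul] at h1; exact_mod_cast h1
    omega
  set f : Fin (N + 1) → Fin N := fun m => ⟨(⌊Int.fract ((m : ℝ) * α) * N⌋).toNat, hmem m⟩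
    with hf
  obtain ⟨a, b, hab, hfab⟩ := Fintype.exists_ne_map_eq_of_card_lt f hcard
  have main : ∀ a b : Fin (N + 1), (a : ℕ) < (b : ℕ) → f a = f b →
      ∃ m : ℕ, 0 < m ∧ (Int.fract ((m : ℝ) * α) < ε ∨ 1 - ε < Int.fract ((m : ℝ) * α)) := by
    clear hab hfab a b
    intro a b hlt hfe
    set x := Int.fract ((a : ℝ) * α) with hx
    set y := Int.fract ((b : ℝ) * α) with hy
    have hx0 : 0 ≤ x := Int.fract_nonneg _
    have hy0 : 0 ≤ y := Int.fract_nonneg _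
    have hx1 : x < 1 := Int.fract_lt_one _
    have hy1 : y < 1 := Int.fract_lt_one _
    have hfloor : ⌊x * N⌋ = ⌊y * N⌋ := by
      have h1 : (⌊x * N⌋).toNat = (⌊y * N⌋).toNat := congrArg Fin.val hfe
      have h2 : 0 ≤ ⌊x * N⌋ := Int.floor_nonneg.mpr (by positivity)
      have h3 : 0 ≤ ⌊y * N⌋ := Int.floor_nonneg.mpr (by positivity)
      omega
    have hd : |y - x| < ε := by
      have h1 : x * N < ⌊x * N⌋ + 1 := Int.lt_floor_add_one _
      have h2 : y * N < ⌊y * N⌋ + 1 := Int.lt_floor_add_one _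
      have h3 : (⌊x * N⌋ : ℝ) ≤ x * N := Int.floor_le _
      have h4 : (⌊y * N⌋ : ℝ) ≤ y * N := Int.floor_le _
      have h5 : |y * N - x * N| < 1 := by
        rw [abs_lt]; rw [hfloor] at h1 h3; constructor <;> linarith
      have hNpos : (0:ℝ) < N := by exact_mod_cast hN0
      have hεN : 1 < ε * N := by
        rw [div_lt_iff₀ hNpos] at hNε; linarith
      rw [abs_lt] at h5 ⊢
      constructor
      · nlinarith [h5.1]
      · nlinarith [h5.2]
    set m : ℕ := (b : ℕ) - (a : ℕ) with hm
    have hm0 : 0 < m := by omega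
    have hcast : ((m : ℕ) : ℝ) * α = (b : ℝ) * α - (a : ℝ) * α := by
      have : ((m : ℕ) : ℝ) = ((b : ℕ) : ℝ) - ((a : ℕ) : ℝ) := by
        rw [hm]; push_cast [Nat.cast_sub hlt.le]; ring
      rw [this]; ring
    set d : ℝ := y - x with hdd
    have hfd : Int.fract ((m : ℝ) * α) = Int.fract d := by
      have : (m : ℝ) * α = d + ((⌊(b : ℝ) * α⌋ - ⌊(a : ℝ) * α⌋ : ℤ) : ℝ) := by
        rw [hcast, hdd, hy, hx]; push_cast; rw [Int.fract, Int.fract]; ring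
      rw [this, Int.fract_add_intCast]
    have hdne : d ≠ 0 := by
      intro h0
      have : Int.fract ((m : ℝ) * α) = 0 := by rw [hfd, h0, Int.fract_zero]
      have hirr' : Irrational ((m : ℕ) * α) := hirr.natCast_mul (by omega)
      have : ((m : ℝ) * α) = (⌊(m : ℝ) * α⌋ : ℝ) := by
        have h2 := Int.fract_add_floor ((m : ℝ) * α)
        rw [this] at h2; linarith
      exact (hirr'.ne_int ⌊(m : ℝ) * α⌋) (by exact_mod_cast this)
    refine ⟨m, hm0, ?_⟩
    rcases lt_or_gt_of_ne hdne with hneg | hpos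
    · right
      have hdgt : -1 < d := by rw [hdd]; linarith
      have h1 : Int.fract d = d + 1 := by
        have h2 : Int.fract (d + ((1:ℤ):ℝ)) = Int.fract d := Int.fract_add_intCast d 1
        have h3 : Int.fract (d + ((1:ℤ):ℝ)) = d + 1 := by
          push_cast
          exact Int.fract_eq_self.mpr ⟨by linarith, by linarith⟩
        rw [← h2, h3]
      rw [hfd, h1]
      have : -d < ε := by rw [abs_lt] at hd; linarith [hd.1]
      linarith
    · left
      have h1 : Int.fract d = d := Int.fract_eq_self.mpr ⟨le_of_lt hpos, by linarith⟩
      rw [hfd, h1]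
      rw [abs_lt] at hd; exact hd.2
  rcases Nat.lt_or_ge (a : ℕ) (b : ℕ) with h | h
  · exact main a b h hfab
  · have hne : (a : ℕ) ≠ (b : ℕ) := fun h' => hab (Fin.ext h')
    exact main b a (by omega) hfab.symm





lemma hit_up (ε σ : ℝ) (hσ0 : 0 < σ) (hσ1 : σ < 1) (hσε : σ < ε) (y : ℕ → ℝ)
    (hy0 : ∀ k, 0 ≤ y k) (hy1 : ∀ k, y k < 1)
    (hstep : ∀ k, y (k + 1) = Int.fract (y k + σ)) :
    ∃ k ≤ ⌈1 / σ⌉₊, y k < ε := by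
  by_contra h
  push_neg at h
  set K := ⌈1 / σ⌉₊ with hK
  have hmono : ∀ k ≤ K, y 0 + k * σ ≤ y k := by
    intro k hk
    induction k with
    | zero => simp
    | succ n ih =>
      have hn : n ≤ K := by omega
      have ihn := ih hn
      have hεn : ε ≤ y (n + 1) := h (n + 1) hk
      by_cases hc : y n + σ < 1
      · have : y (n + 1) = y n + σ := by
          rw [hstep n]
          exact Int.fract_eq_self.mpr ⟨by linarith [hy0 n], hc⟩
        rw [this]; push_cast; linarith
      · push_neg at hc
        exfalso
        have h2 : y n + σ < 2 := by linarith [hy1 n]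
        have : y (n + 1) = y n + σ - 1 := by
          rw [hstep n]
          have h3 : Int.fract ((y n + σ - 1) + ((1:ℤ):ℝ)) = Int.fract (y n + σ - 1) :=
            Int.fract_add_intCast _ 1
          have h4 : Int.fract (y n + σ - 1) = y n + σ - 1 :=
            Int.fract_eq_self.mpr ⟨by linarith, by linarith⟩
          calc Int.fract (y n + σ) = Int.fract ((y n + σ - 1) + ((1:ℤ):ℝ)) := by norm_num
          _ = y n + σ - 1 := by rw [h3, h4]
        have : y (n + 1) < σ := by linarith [hy1 n]
        linarith
  have hKσ : 1 ≤ (K : ℝ) * σ := by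
    have := Nat.le_ceil (1 / σ)
    rw [← hK] at this
    calc (1:ℝ) = (1/σ) * σ := by field_simp
    _ ≤ (K : ℝ) * σ := by apply mul_le_mul_of_nonneg_right this hσ0.le
  have := hmono K le_rfl
  have := hy1 K
  have := hy0 0
  linarith

lemma hit_down (ε σ : ℝ) (hσ0 : 0 < σ) (hσε : σ < ε) (y : ℕ → ℝ)
    (hy0 : ∀ k, 0 ≤ y k) (hy1 : ∀ k, y k < 1)
    (hstep : ∀ k, y (k + 1) = Int.fract (y k - σ)) :
    ∃ k ≤ ⌈1 / σ⌉₊, y k < ε := by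
  by_contra h
  push_neg at h
  set K := ⌈1 / σ⌉₊ with hK
  have hmono : ∀ k ≤ K, y k ≤ y 0 - k * σ := by
    intro k hk
    induction k with
    | zero => simp
    | succ n ih =>
      have hn : n ≤ K := by omega
      have ihn := ih hn
      have hεn : ε ≤ y n := h n hn
      have : y (n + 1) = y n - σ := by
        rw [hstep n]
        exact Int.fract_eq_self.mpr ⟨by linarith, by linarith [hy1 n]⟩
      rw [this]; push_cast; linarith
  have hKσ : 1 ≤ (K : ℝ) * σ := by
    have := Nat.le_ceil (1 / σ)
    rw [← hK] at this
    calc (1:ℝ) = (1/σ) * σ := by field_simp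
    _ ≤ (K : ℝ) * σ := by apply mul_le_mul_of_nonneg_right this hσ0.le
  have := hmono K le_rfl
  have := hy0 K
  have := hy1 0
  linarith


open SturmianAux SturmianAux in

lemma bounded_gaps (α θ : ℝ) (hirr : Irrational α) (ε : ℝ) (hε0 : 0 < ε) :
    ∃ l : ℕ, ∀ i : ℕ, ∃ j : ℕ, i ≤ j ∧ j ≤ i + l ∧ Int.fract (α * j + θ) < ε := by
  obtain ⟨m, hm0, hcase⟩ := SturmianAux.exists_small_step α hirr ε hε0
  have hfrm0 : 0 < Int.fract ((m:ℝ) * α) := by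
    rcases lt_or_eq_of_le (Int.fract_nonneg ((m:ℝ) * α)) with h | h
    · exact h
    · exfalso
      have hirr' : Irrational ((m:ℕ) * α) := hirr.natCast_mul (by omega)
      have h2 := Int.fract_add_floor ((m:ℝ) * α)
      rw [← h] at h2
      exact (hirr'.ne_int ⌊(m:ℝ) * α⌋) (by push_cast at h2 ⊢; linarith)
  have hfrm1 : Int.fract ((m:ℝ) * α) < 1 := Int.fract_lt_one _
  rcases hcase with hup | hdown
  · -- fract (m α) ∈ (0, ε) : steps go up
    set σ := Int.fract ((m:ℝ) * α) with hσ
    refine ⟨m * ⌈1 / σ⌉₊, fun i => ?_⟩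
    set y : ℕ → ℝ := fun k => Int.fract (α * ((i + k * m : ℕ) : ℝ) + θ) with hy
    have hstep : ∀ k, y (k + 1) = Int.fract (y k + σ) := by
      intro k
      have e1 : α * ((i + (k + 1) * m : ℕ) : ℝ) + θ
          = (α * ((i + k * m : ℕ) : ℝ) + θ) + (m:ℝ) * α := by push_cast; ring
      rw [hy]
      simp only
      rw [e1, SturmianAux.fract_add_left, SturmianAux.fract_add_right]
    obtain ⟨k, hk, hky⟩ := SturmianAux.hit_up ε σ hfrm0 hfrm1 hup y
      (fun k => Int.fract_nonneg _) (fun k => Int.fract_lt_one _) hstep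
    exact ⟨i + k * m, by omega, by nlinarith [hk], by
      have : Int.fract (α * ((i + k * m : ℕ) : ℝ) + θ) < ε := hky
      exact_mod_cast this⟩
  · -- fract (m α) ∈ (1 - ε, 1) : steps go down by σ' := 1 - fract(mα)
    set σ := 1 - Int.fract ((m:ℝ) * α) with hσ
    have hσ0 : 0 < σ := by rw [hσ]; linarith
    have hσε : σ < ε := by rw [hσ]; linarith
    refine ⟨m * ⌈1 / σ⌉₊, fun i => ?_⟩
    set y : ℕ → ℝ := fun k => Int.fract (α * ((i + k * m : ℕ) : ℝ) + θ) with hy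
    have hstep : ∀ k, y (k + 1) = Int.fract (y k - σ) := by
      intro k
      have e1 : α * ((i + (k + 1) * m : ℕ) : ℝ) + θ
          = (α * ((i + k * m : ℕ) : ℝ) + θ) + (m:ℝ) * α := by push_cast; ring
      rw [hy]
      simp only
      rw [e1, SturmianAux.fract_add_left, SturmianAux.fract_add_right]
      have e2 : Int.fract (α * ((i + k * m : ℕ) : ℝ) + θ) + Int.fract ((m:ℝ) * α)
          = (Int.fract (α * ((i + k * m : ℕ) : ℝ) + θ) - σ) + ((1:ℤ):ℝ) := by
        rw [hσ]; push_cast; ring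
      rw [e2, Int.fract_add_intCast]
    obtain ⟨k, hk, hky⟩ := SturmianAux.hit_down ε σ hσ0 hσε y
      (fun k => Int.fract_nonneg _) (fun k => Int.fract_lt_one _) hstep
    exact ⟨i + k * m, by omega, by nlinarith [hk], hky⟩


theorem sturmian_almostPeriodic' (α ρ : ℝ) (hirr : Irrational α)
    (hα0 : 0 < α) (hα1 : α < 1) :
    AlmostPeriodic (fun n : ℕ => ⌊α * ((n : ℝ) + 1) + ρ⌋ - ⌊α * (n : ℝ) + ρ⌋) := by
  intro u hu
  rcases Nat.eq_zero_or_pos u.length with h0 | hpos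
  · exact ⟨0, fun i => ⟨i, le_rfl, by omega, fun j => absurd j.2 (by omega)⟩⟩
  obtain ⟨i0, hi0⟩ := hu
  have hP0 : P α u (Int.fract (α * i0 + ρ)) := (occurs_iff α ρ u i0).mp hi0
  set β0 := Int.fract (α * i0 + ρ) with hβ0
  obtain ⟨ε, hε0, hstab⟩ := stability α hα0 hα1 u β0 hP0
  obtain ⟨l0, hl0⟩ := bounded_gaps α (ρ - β0) hirr ε hε0
  refine ⟨l0 + u.length, fun i => ?_⟩
  obtain ⟨j, hij, hjl, hfr⟩ := hl0 i
  refine ⟨j, hij, by omega, ?_⟩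
  rw [occurs_iff]
  set d := Int.fract (α * j + (ρ - β0)) with hd
  have hd0 : 0 ≤ d := Int.fract_nonneg _
  have hPd : P α u (β0 + d) := hstab d hd0 hfr
  have h1 : Int.fract (α * j + ρ) = Int.fract ((β0 + d) + ((-⌊β0 + d⌋ : ℤ) : ℝ)) := by
    have e1 : α * j + ρ = (α * j + (ρ - β0)) + β0 := by ring
    rw [e1, fract_add_left, ← hd, add_comm d β0]
    rw [Int.fract_add_intCast]
  have h2 : Int.fract ((β0 + d) + ((-⌊β0 + d⌋ : ℤ) : ℝ)) = (β0 + d) + ((-⌊β0 + d⌋ : ℤ) : ℝ) := by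
    rw [Int.fract_add_intCast]
    rw [Int.fract]
    push_cast
    ring
  rw [h1, h2]
  exact P_add_int α u (β0 + d) _ hPd


end SturmianAux

open SturmianAux in
/-- Every Sturmian (lower mechanical with irrational slope) sequence is
almost periodic. -/
theorem sturmian_almostPeriodic (α ρ : ℝ) (hirr : Irrational α)
    (hα0 : 0 < α) (hα1 : α < 1) (hρ0 : 0 ≤ ρ) (hρ1 : ρ < 1) :
    AlmostPeriodic (fun n : ℕ => ⌊α * ((n : ℝ) + 1) + ρ⌋ - ⌊α * (n : ℝ) + ρ⌋) :=
  SturmianAux.sturmian_almostPeriodic' α ρ hirr hα0 hα1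
end

section
/- For every sequence x over a finite alphabet, the Kolmogorov-complexity entropy E_k(x) = lim_{n→∞} (1/n)·max{K(u) : u a factor of x of length n} exists and equals the topological entropy E_t(x) = lim_{n→∞} (1/n)·log(p_x(n)). -/
open Filter

/-- Kolmogorov complexity of `u` relative to the decoder `D`:
the least length of a binary description of `u`. -/
noncomputable def kolmComplexity {A : Type*} (D : List Bool → Option (List A))
    (u : List A) : ℕ :=
  sInf {m : ℕ | ∃ p : List Bool, p.length = m ∧ D p = some u}

/-- The maximal Kolmogorov complexity of a length-`n` factor of `x`. -/
noncomputable def maxFactorComplexity {A : Type*} (D : List Bool → Option (List A))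
    (x : ℕ → A) (n : ℕ) : ℕ :=
  sSup {m : ℕ | ∃ u : List A, u.length = n ∧ (∃ i, occursAt x u i) ∧
    m = kolmComplexity D u}


namespace KEnt


/-- little-endian value of a bit string -/
def bitsToNat (l : List Bool) : ℕ := l.foldr (fun b acc => (cond b 1 0) + 2 * acc) 0

@[simp] lemma bitsToNat_nil : bitsToNat [] = 0 := rfl
@[simp] lemma bitsToNat_cons (b : Bool) (l : List Bool) :
    bitsToNat (b :: l) = (cond b 1 0) + 2 * bitsToNat l := rfl

/-- fixed-width little-endian encoding -/
def natToBits (w v : ℕ) : List Bool := (List.range w).map v.testBit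

@[simp] lemma natToBits_length (w v : ℕ) : (natToBits w v).length = w := by
  simp [natToBits]

lemma natToBits_succ (w v : ℕ) :
    natToBits (w + 1) v = v.testBit 0 :: natToBits w (v / 2) := by
  simp [natToBits, List.range_succ_eq_map, List.map_map, Function.comp_def,
    Nat.testBit_add_one]

lemma bitsToNat_natToBits (w v : ℕ) : bitsToNat (natToBits w v) = v % 2 ^ w := by
  induction w generalizing v with
  | zero => simp [natToBits, Nat.mod_one]
  | succ w ih =>
      rw [natToBits_succ, bitsToNat_cons, ih]
      have h2 : (2:ℕ) ^ (w+1) = 2 * 2 ^ w := by ring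
      rw [h2, Nat.mod_mul]
      congr 1
      rcases Nat.mod_two_eq_zero_or_one v with h | h <;> simp [Nat.testBit_zero, h]

lemma bitsToNat_natToBits_of_lt {w v : ℕ} (h : v < 2 ^ w) :
    bitsToNat (natToBits w v) = v := by
  rw [bitsToNat_natToBits, Nat.mod_eq_of_lt h]

lemma bitsToNat_lt (l : List Bool) : bitsToNat l < 2 ^ l.length := by
  induction l with
  | nil => simp
  | cons b l ih =>
      have : (2:ℕ) ^ (b :: l).length = 2 * 2 ^ l.length := by
        simp [List.length_cons]; ring
      rw [this, bitsToNat_cons]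
      cases b <;> simp <;> omega

lemma bitsToNat_injOn_length {l₁ l₂ : List Bool} (hl : l₁.length = l₂.length)
    (hv : bitsToNat l₁ = bitsToNat l₂) : l₁ = l₂ := by
  induction l₁ generalizing l₂ with
  | nil => cases l₂ <;> simp_all
  | cons b l ih =>
      cases l₂ with
      | nil => simp_all
      | cons c l' =>
          simp only [bitsToNat_cons] at hv
          have hb : b = c := by cases b <;> cases c <;> simp_all <;> omega
          subst hb
          have : bitsToNat l = bitsToNat l' := by cases b <;> simp at hv <;> omega
          simp_all [ih (by simpa using hl) this]

lemma bitsToNat_append (l₁ l₂ : List Bool) :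
    bitsToNat (l₁ ++ l₂) = bitsToNat l₁ + 2 ^ l₁.length * bitsToNat l₂ := by
  induction l₁ with
  | nil => simp
  | cons b l ih => simp [ih]; ring

lemma bitsToNat_append_true_inj {l₁ l₂ : List Bool}
    (h : bitsToNat (l₁ ++ [true]) = bitsToNat (l₂ ++ [true])) : l₁ = l₂ := by
  have e1 : bitsToNat (l₁ ++ [true]) = bitsToNat l₁ + 2 ^ l₁.length := by
    simp [bitsToNat_append]
  have e2 : bitsToNat (l₂ ++ [true]) = bitsToNat l₂ + 2 ^ l₂.length := by
    simp [bitsToNat_append]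
  have hlen : l₁.length = l₂.length := by
    by_contra hne
    rcases Nat.lt_or_ge l₁.length l₂.length with hlt | hge
    · have h1 := bitsToNat_lt l₁
      have h2 : (2:ℕ) ^ l₁.length * 2 ≤ 2 ^ l₂.length := by
        calc (2:ℕ) ^ l₁.length * 2 = 2 ^ (l₁.length + 1) := by ring
        _ ≤ 2 ^ l₂.length := Nat.pow_le_pow_right (by norm_num) hlt
      omega
    · have hlt : l₂.length < l₁.length := lt_of_le_of_ne hge (Ne.symm hne)
      have h1 := bitsToNat_lt l₂
      have h2 : (2:ℕ) ^ l₂.length * 2 ≤ 2 ^ l₁.length := by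
        calc (2:ℕ) ^ l₂.length * 2 = 2 ^ (l₂.length + 1) := by ring
        _ ≤ 2 ^ l₁.length := Nat.pow_le_pow_right (by norm_num) hlt
      omega
  have := bitsToNat_injOn_length (l₁ := l₁ ++ [true]) (l₂ := l₂ ++ [true]) (by simp [hlen]) h
  exact List.append_cancel_right this

lemma bitsToNat_append_true_lt (l : List Bool) :
    bitsToNat (l ++ [true]) < 2 ^ (l.length + 1) := by
  have := bitsToNat_lt (l ++ [true])
  simpa using this




variable {A : Type} (x : ℕ → A)

def Factors (x : ℕ → A) (n : ℕ) : Set (List A) :=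
  {u : List A | u.length = n ∧ ∃ i, occursAt x u i}

lemma subword_eq (n : ℕ) : subwordComplexity x n = (Factors x n).ncard := rfl

def window (x : ℕ → A) (i n : ℕ) : List A := List.ofFn fun j : Fin n => x (i + j)

@[simp] lemma window_length (i n : ℕ) : (window x i n).length = n :=
  List.length_ofFn

lemma window_getElem (i n : ℕ) (j : ℕ) (hj : j < (window x i n).length) :
    (window x i n)[j] = x (i + j) := by
  simp [window]

lemma window_occursAt (i n : ℕ) : occursAt x (window x i n) i := by
  intro j
  rw [List.get_eq_getElem]
  exact (window_getElem x i n j j.isLt).symm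

lemma window_mem (i n : ℕ) : window x i n ∈ Factors x n :=
  ⟨window_length x i n, i, window_occursAt x i n⟩

lemma eq_window_of_occursAt {u : List A} {i : ℕ} (h : occursAt x u i) :
    u = window x i u.length := by
  apply List.ext_get (by simp)
  intro j h₁ h₂
  have := h ⟨j, h₁⟩
  simp only [List.get_eq_getElem] at this ⊢
  rw [window_getElem]
  exact this.symm

lemma window_take (i n t : ℕ) (h : t ≤ n) :
    (window x i n).take t = window x i t := by
  apply List.ext_get (by simp [h])
  intro j h₁ h₂
  simp only [List.get_eq_getElem, List.getElem_take, window_getElem]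

lemma window_append (i a b : ℕ) :
    window x i a ++ window x (i + a) b = window x i (a + b) := by
  apply List.ext_get (by simp)
  intro j h₁ h₂
  simp only [List.get_eq_getElem, List.getElem_append, window_getElem]
  split
  · rfl
  · simp only [window_length] at *
    congr 1
    omega

variable [Fintype A]

lemma factors_finite (n : ℕ) : (Factors x n).Finite :=
  (List.finite_length_eq A n).subset fun _ hu => hu.1

lemma factors_nonempty (n : ℕ) : (Factors x n).Nonempty :=
  ⟨window x 0 n, window_mem x 0 n⟩

lemma one_le_subword (n : ℕ) : 1 ≤ subwordComplexity x n := by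
  rw [subword_eq]
  exact (Set.ncard_pos (factors_finite x n)).mpr (factors_nonempty x n)

lemma take_mem_factors {u : List A} {a b : ℕ} (hu : u ∈ Factors x (a + b)) :
    u.take a ∈ Factors x a := by
  obtain ⟨hlen, i, hocc⟩ := hu
  refine ⟨by simp [hlen], i, ?_⟩
  intro j
  have hj : (j : ℕ) < u.length := by
    have := j.isLt; simp [hlen] at this ⊢; omega
  have := hocc ⟨j, hj⟩
  simp only [List.get_eq_getElem] at this ⊢
  rw [List.getElem_take]
  exact this

lemma drop_mem_factors {u : List A} {a b : ℕ} (hu : u ∈ Factors x (a + b)) :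
    u.drop a ∈ Factors x b := by
  obtain ⟨hlen, i, hocc⟩ := hu
  refine ⟨by simp [hlen], i + a, ?_⟩
  intro j
  have hj : a + (j : ℕ) < u.length := by
    have := j.isLt; simp [hlen] at this ⊢; omega
  have := hocc ⟨a + j, hj⟩
  simp only [List.get_eq_getElem] at this ⊢
  rw [List.getElem_drop, ← this]
  ring_nf

lemma subword_subadditive (a b : ℕ) :
    subwordComplexity x (a + b) ≤ subwordComplexity x a * subwordComplexity x b := by
  rw [subword_eq, subword_eq, subword_eq]
  have hmaps : ∀ u ∈ Factors x (a + b),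
      (u.take a, u.drop a) ∈ (Factors x a) ×ˢ (Factors x b) := fun u hu =>
    ⟨take_mem_factors x hu, drop_mem_factors x hu⟩
  have hinj : Set.InjOn (fun u : List A => (u.take a, u.drop a)) (Factors x (a + b)) := by
    intro u hu v hv h
    simp only [Prod.mk.injEq] at h
    rw [← List.take_append_drop a u, ← List.take_append_drop a v, h.1, h.2]
  have hfin : ((Factors x a) ×ˢ (Factors x b)).Finite :=
    (factors_finite x a).prod (factors_finite x b)
  calc (Factors x (a+b)).ncard ≤ ((Factors x a) ×ˢ (Factors x b)).ncard :=
        Set.ncard_le_ncard_of_injOn _ hmaps hinj hfin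
    _ = (Factors x a).ncard * (Factors x b).ncard := by
        rw [← Nat.card_coe_set_eq, ← Nat.card_coe_set_eq, ← Nat.card_coe_set_eq,
          Nat.card_congr (Equiv.Set.prod _ _), Nat.card_prod]


variable {A : Type}



def segVal (p : List Bool) (s t : ℕ) : ℕ :=
  bitsToNat ((List.range t).map fun j => p.getD (s + j) false)

def takeN {α : Type*} (d : α) (n : ℕ) (v : List α) : List α :=
  (List.range n).map fun i => v.getD i d

def decodeBlocks {A : Type} (d : A) (m w0 w : ℕ) (L : List (List A))
    (p : List Bool) : Option (List A) :=
  some (takeN d (m * ((p.length - w0) / w) - segVal p 0 w0)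
    (((List.range ((p.length - w0) / w)).map fun i =>
      L.getD (segVal p (w0 + i * w) w) []).flatten))

open Primrec in
lemma primrec_bitsToNat : Primrec bitsToNat := by
  have h : Primrec₂ (fun (_ : List Bool) (bs : Bool × ℕ) => (cond bs.1 1 0) + 2 * bs.2) :=
    (nat_add.comp (Primrec.cond (fst.comp snd) (const 1) (const 0))
      (nat_mul.comp (const 2) (snd.comp snd))).to₂
  exact (list_foldr Primrec.id (const 0) h).of_eq fun l => rfl

open Primrec in
lemma primrec_segVal (t : ℕ) : Primrec₂ (fun p s => segVal p s t) := by
  have h : Primrec₂ (fun (a : List Bool × ℕ) (j : ℕ) => a.1.getD (a.2 + j) false) :=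
    ((list_getD false).comp (fst.comp fst) (nat_add.comp (snd.comp fst) snd)).to₂
  exact (primrec_bitsToNat.comp (list_map (const (List.range t)) h)).to₂

open Primrec in
lemma computable_decodeBlocks {A : Type} [Primcodable A] (d : A) (m w0 w : ℕ)
    (L : List (List A)) : Computable (decodeBlocks d m w0 w L) := by
  have hk : Primrec fun p : List Bool => (p.length - w0) / w :=
    nat_div.comp (nat_sub.comp list_length (const w0)) (const w)
  have hdict : Primrec fun p : List Bool =>
      (List.range ((p.length - w0) / w)).map fun i => L.getD (segVal p (w0 + i * w) w) [] :=
    list_map (list_range.comp hk)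
      (((list_getD ([] : List A)).comp (const L)
        ((primrec_segVal w).comp fst
          (nat_add.comp (const w0) (nat_mul.comp snd (const w))))).to₂)
  have hflat : Primrec fun p : List Bool =>
      ((List.range ((p.length - w0) / w)).map fun i =>
        L.getD (segVal p (w0 + i * w) w) []).flatten :=
    list_flatten.comp hdict
  have hlen2 : Primrec fun p : List Bool =>
      m * ((p.length - w0) / w) - segVal p 0 w0 :=
    nat_sub.comp (nat_mul.comp (const m) hk)
      ((primrec_segVal w0).comp Primrec.id (const 0))
  have htake : Primrec fun p : List Bool =>
      takeN d (m * ((p.length - w0) / w) - segVal p 0 w0)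
        (((List.range ((p.length - w0) / w)).map fun i =>
          L.getD (segVal p (w0 + i * w) w) []).flatten) :=
    list_map (list_range.comp hlen2) (((list_getD d).comp (hflat.comp fst) snd).to₂)
  exact (option_some.comp htake).to_comp

lemma segVal_eq (p : List Bool) (s t : ℕ) (h : s + t ≤ p.length) :
    segVal p s t = bitsToNat ((p.drop s).take t) := by
  unfold segVal
  congr 1
  apply List.ext_get
  · simp; omega
  · intro j h₁ h₂
    simp only [List.get_eq_getElem, List.getElem_map, List.getElem_range,
      List.getElem_take, List.getElem_drop]
    have hj : j < t := by simpa using h₁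
    rw [List.getD_eq_getElem _ _ (by omega)]

lemma takeN_eq_take {α : Type*} (d : α) (n : ℕ) (v : List α) (h : n ≤ v.length) :
    takeN d n v = v.take n := by
  apply List.ext_get
  · simp [takeN]; omega
  · intro j h₁ h₂
    have hj : j < n := by simpa [takeN] using h₁
    simp only [takeN, List.get_eq_getElem, List.getElem_map, List.getElem_range,
      List.getElem_take]
    rw [List.getD_eq_getElem _ _ (by omega)]


lemma flatten_drop_take {α : Type*} (w : ℕ) :
    ∀ (cs : List (List α)), (∀ c ∈ cs, c.length = w) →
    ∀ (i : ℕ) (hi : i < cs.length), (cs.flatten.drop (i * w)).take w = cs[i]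
  | c :: cs, hw, 0, hi => by
      simp only [List.flatten_cons, Nat.zero_mul, List.drop_zero]
      have hc : c.length = w := hw c (by simp)
      rw [← hc, List.take_left]
      simp
  | c :: cs, hw, (i+1), hi => by
      have hc : c.length = w := hw c (by simp)
      have he : (i + 1) * w = c.length + i * w := by rw [hc]; ring
      rw [List.flatten_cons, he, List.drop_length_add_append]
      rw [flatten_drop_take w cs (fun c hc => hw c (by simp [hc])) i (by simpa using hi)]
      simp

variable (x : ℕ → A)



lemma window_zero (i : ℕ) : window x i 0 = [] := by
  simp [window]

lemma flatten_windows (i m : ℕ) :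
    ∀ k, ((List.range k).map fun j => window x (i + j * m) m).flatten = window x i (k * m)
  | 0 => by simp [window_zero]
  | (k+1) => by
      rw [List.range_succ, List.map_append, List.flatten_append, flatten_windows i m k]
      simp only [List.map_cons, List.map_nil, List.flatten_cons, List.flatten_nil,
        List.append_nil]
      rw [window_append x i (k * m) m]
      congr 1
      ring

lemma exists_program (d : A) (m : ℕ) (hm : 1 ≤ m) (L : List (List A))
    (hL : ∀ v ∈ Factors x m, v ∈ L) {n : ℕ} (hn : 1 ≤ n) {u : List A}
    (hu : u ∈ Factors x n) :
    ∃ p : List Bool, decodeBlocks d m m.size L.length.size L p = some u ∧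
      p.length = m.size + ((n + m - 1) / m) * L.length.size := by
  classical
  obtain ⟨hlen, i, hocc⟩ := hu
  set w0 := m.size with hw0
  set w := L.length.size with hwdef
  set k := (n + m - 1) / m with hk
  have hLne : 0 < L.length :=
    List.length_pos_iff.mpr (List.ne_nil_of_mem (hL _ (window_mem x 0 m)))
  have hw : 0 < w := Nat.size_pos.mpr hLne
  have heq : m * k + (n + m - 1) % m = n + m - 1 := by
    rw [hk]; exact Nat.div_add_mod _ _
  have hr : (n + m - 1) % m < m := Nat.mod_lt _ hm
  have hmk1 : n ≤ m * k := by omega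
  have hmk2 : m * k ≤ n + m - 1 := by omega
  set pad := m * k - n with hpaddef
  have hpad : pad < m := by omega
  have hpadlt : pad < 2 ^ w0 := lt_trans hpad (Nat.lt_size_self m)
  set blocks := fun j : ℕ => window x (i + j * m) m with hblocks
  have hblockmem : ∀ j, blocks j ∈ L := fun j => by
    rw [hblocks]; exact hL _ (window_mem x _ m)
  have hexists : ∀ j : ℕ, ∃ t : ℕ, t < L.length ∧ L.getD t [] = blocks j := by
    intro j
    obtain ⟨t, ht, hteq⟩ := List.mem_iff_getElem.mp (hblockmem j)
    exact ⟨t, ht, by rw [List.getD_eq_getElem _ _ ht]; exact hteq⟩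
  choose idx hidx hidxeq using hexists
  have hidxlt : ∀ j, idx j < 2 ^ w := fun j =>
    lt_trans (hidx j) (Nat.lt_size_self L.length)
  set tailp := ((List.range k).map fun j => natToBits w (idx j)).flatten with htailp
  have htail_len : tailp.length = k * w := by
    rw [htailp, List.length_flatten, List.map_map]
    have : (List.length ∘ fun j => natToBits w (idx j)) = fun _ : ℕ => w := by
      funext j; simp
    rw [this, List.map_const', List.sum_replicate, List.length_range, smul_eq_mul]
  set p := natToBits w0 pad ++ tailp with hp
  have hplen : p.length = w0 + k * w := by
    rw [hp, List.length_append, natToBits_length, htail_len]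
  have hk' : (p.length - w0) / w = k := by
    rw [hplen, Nat.add_sub_cancel_left, Nat.mul_div_cancel _ hw]
  have hdrop : p.drop w0 = tailp := by
    have := List.drop_left (l₁ := natToBits w0 pad) (l₂ := tailp)
    rwa [natToBits_length] at this
  have hseg0 : segVal p 0 w0 = pad := by
    rw [segVal_eq p 0 w0 (by omega), List.drop_zero]
    have htake : p.take w0 = natToBits w0 pad := by
      have := List.take_left (l₁ := natToBits w0 pad) (l₂ := tailp)
      rwa [natToBits_length] at this
    rw [htake, bitsToNat_natToBits_of_lt hpadlt]
  have hsegi : ∀ j < k, segVal p (w0 + j * w) w = idx j := by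
    intro j hj
    have hjw : j * w + w ≤ k * w := by
      have : j + 1 ≤ k := hj
      calc j * w + w = (j + 1) * w := by ring
        _ ≤ k * w := Nat.mul_le_mul_right w this
    rw [segVal_eq p _ _ (by omega)]
    rw [← List.drop_drop, hdrop]
    have hlens : ∀ c ∈ (List.range k).map fun j => natToBits w (idx j), c.length = w := by
      intro c hc
      simp only [List.mem_map] at hc
      obtain ⟨a, _, ha⟩ := hc
      rw [← ha, natToBits_length]
    have hjlt : j < ((List.range k).map fun j => natToBits w (idx j)).length := by
      simpa using hj
    rw [htailp, flatten_drop_take w _ hlens j hjlt]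
    have : ((List.range k).map fun j => natToBits w (idx j))[j] = natToBits w (idx j) := by
      simp
    rw [this, bitsToNat_natToBits_of_lt (hidxlt j)]
  refine ⟨p, ?_, by rw [hplen]⟩
  unfold decodeBlocks
  rw [hk', hseg0]
  have hmapeq : ((List.range k).map fun j => L.getD (segVal p (w0 + j * w) w) []) =
      (List.range k).map blocks := by
    apply List.map_congr_left
    intro j hj
    rw [hsegi j (List.mem_range.mp hj)]
    exact hidxeq j
  rw [hmapeq, hblocks, flatten_windows x i m k]
  have hnk : m * k - pad = n := by omega
  rw [hnk, takeN_eq_take d n _ (by rw [window_length, Nat.mul_comm]; exact hmk1)]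
  rw [window_take x i (k * m) n (by rw [Nat.mul_comm]; exact hmk1)]
  congr 1
  rw [eq_window_of_occursAt x hocc, hlen]
end KEnt

/-- For any sequence over a finite alphabet, the Kolmogorov-complexity entropy
`E_k(x) = lim (1/n)·max{K(u) : u factor of length n}` exists and equals the
topological entropy `E_t(x) = lim (1/n)·log₂ p_x(n)`.  Here `K` is taken
relative to a computable decoder `D` that is additively optimal among
computable decoders. -/
theorem kolmogorov_entropy_eq_topological_entropy {A : Type} [Primcodable A] [Fintype A]
    (D : List Bool → Option (List A)) (hD : Computable D)
    (hU : ∀ D' : List Bool → Option (List A), Computable D' →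
      ∃ C : ℕ, ∀ (p' : List Bool) (u : List A), D' p' = some u →
        ∃ p : List Bool, D p = some u ∧ p.length ≤ p'.length + C)
    (x : ℕ → A) :
    ∃ E : ℝ,
      Tendsto (fun n : ℕ => Real.logb 2 (subwordComplexity x n : ℝ) / (n : ℝ))
        atTop (nhds E) ∧
      Tendsto (fun n : ℕ => (maxFactorComplexity D x n : ℝ) / (n : ℝ))
        atTop (nhds E) := by
  classical
  have hP1 : ∀ n, 1 ≤ subwordComplexity x n := fun n => KEnt.one_le_subword x n
  set f : ℕ → ℝ := fun n => Real.logb 2 (subwordComplexity x n : ℝ) with hfdef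
  have hPpos : ∀ n, (0:ℝ) < (subwordComplexity x n : ℝ) := fun n => by
    exact_mod_cast hP1 n
  have hf0 : ∀ n, 0 ≤ f n := fun n =>
    Real.logb_nonneg (by norm_num) (by exact_mod_cast hP1 n)
  have hsub : Subadditive f := by
    intro a b
    have hm := KEnt.subword_subadditive x a b
    have h2 : (0:ℝ) < (subwordComplexity x a : ℝ) * (subwordComplexity x b : ℝ) :=
      mul_pos (hPpos a) (hPpos b)
    calc f (a+b) ≤ Real.logb 2 ((subwordComplexity x a : ℝ) * (subwordComplexity x b : ℝ)) := by
          rw [hfdef]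
          refine (Real.logb_le_logb (by norm_num) (hPpos _) h2).mpr ?_
          exact_mod_cast hm
      _ = f a + f b := Real.logb_mul (ne_of_gt (hPpos a)) (ne_of_gt (hPpos b))
  have hbdd : BddBelow (Set.range fun n : ℕ => f n / n) := by
    refine ⟨0, ?_⟩
    rintro y ⟨n, rfl⟩
    exact div_nonneg (hf0 n) (Nat.cast_nonneg n)
  have hfE : Tendsto (fun n : ℕ => f n / n) atTop (nhds hsub.lim) := hsub.tendsto_lim hbdd
  set E := hsub.lim with hEdef
  refine ⟨E, hfE, ?_⟩
  -- key upper bound: programs for factors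
  have key : ∀ m : ℕ, 1 ≤ m → ∃ c : ℕ, ∀ n : ℕ, 1 ≤ n → ∀ u ∈ KEnt.Factors x n,
      ∃ p : List Bool, D p = some u ∧
        p.length ≤ c + ((n + m - 1) / m) * (subwordComplexity x m).size := by
    intro m hm
    set L := ((KEnt.factors_finite x m).toFinset).toList with hLdef
    have hLlen : L.length = subwordComplexity x m := by
      rw [hLdef, Finset.length_toList, KEnt.subword_eq,
        Set.ncard_eq_toFinset_card _ (KEnt.factors_finite x m)]
    have hL : ∀ v ∈ KEnt.Factors x m, v ∈ L := fun v hv => by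
      rw [hLdef, Finset.mem_toList, Set.Finite.mem_toFinset]
      exact hv
    obtain ⟨C, hC⟩ := hU _ (KEnt.computable_decodeBlocks (x 0) m m.size L.length.size L)
    refine ⟨m.size + C, fun n hn u hu => ?_⟩
    obtain ⟨p', hp'dec, hp'len⟩ := KEnt.exists_program x (x 0) m hm L hL hn hu
    obtain ⟨p, hDp, hplen⟩ := hC p' u hp'dec
    have hsz : L.length.size = (subwordComplexity x m).size := by rw [hLlen]
    rw [hsz] at hp'len
    exact ⟨p, hDp, by omega⟩
  obtain ⟨c₁, hc₁⟩ := key 1 le_rfl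
  have hSdef : ∀ n, maxFactorComplexity D x n = sSup {b : ℕ | ∃ u : List A,
      u.length = n ∧ (∃ i, occursAt x u i) ∧ b = kolmComplexity D u} := fun n => rfl
  have hSne : ∀ n, {b : ℕ | ∃ u : List A,
      u.length = n ∧ (∃ i, occursAt x u i) ∧ b = kolmComplexity D u}.Nonempty := fun n =>
    ⟨kolmComplexity D (KEnt.window x 0 n), KEnt.window x 0 n, KEnt.window_length x 0 n,
      ⟨0, KEnt.window_occursAt x 0 n⟩, rfl⟩
  have hKle : ∀ m : ℕ, 1 ≤ m → ∀ c : ℕ, (∀ n : ℕ, 1 ≤ n → ∀ u ∈ KEnt.Factors x n,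
      ∃ p : List Bool, D p = some u ∧
        p.length ≤ c + ((n + m - 1) / m) * (subwordComplexity x m).size) →
      ∀ n : ℕ, 1 ≤ n → ∀ u ∈ KEnt.Factors x n,
        kolmComplexity D u ≤ c + ((n + m - 1) / m) * (subwordComplexity x m).size := by
    intro m hm c hc n hn u hu
    obtain ⟨p, hDp, hlen⟩ := hc n hn u hu
    exact le_trans (Nat.sInf_le ⟨p, rfl, hDp⟩) hlen
  have hKle1 := hKle 1 le_rfl c₁ hc₁
  have hSbdd : ∀ n, 1 ≤ n → BddAbove {b : ℕ | ∃ u : List A,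
      u.length = n ∧ (∃ i, occursAt x u i) ∧ b = kolmComplexity D u} := by
    intro n hn
    refine ⟨c₁ + ((n + 1 - 1) / 1) * (subwordComplexity x 1).size, ?_⟩
    rintro b ⟨u, h1, h2, rfl⟩
    exact hKle1 n hn u ⟨h1, h2⟩
  have hKmax : ∀ n, 1 ≤ n → ∀ u ∈ KEnt.Factors x n,
      kolmComplexity D u ≤ maxFactorComplexity D x n := by
    intro n hn u hu
    rw [hSdef]
    exact le_csSup (hSbdd n hn) ⟨u, hu.1, hu.2, rfl⟩
  have hmaxle : ∀ m : ℕ, 1 ≤ m → ∀ c : ℕ, (∀ n : ℕ, 1 ≤ n → ∀ u ∈ KEnt.Factors x n,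
      ∃ p : List Bool, D p = some u ∧
        p.length ≤ c + ((n + m - 1) / m) * (subwordComplexity x m).size) →
      ∀ n : ℕ, 1 ≤ n →
        maxFactorComplexity D x n ≤ c + ((n + m - 1) / m) * (subwordComplexity x m).size := by
    intro m hm c hc n hn
    rw [hSdef]
    refine csSup_le (hSne n) ?_
    rintro b ⟨u, h1, h2, rfl⟩
    exact hKle m hm c hc n hn u ⟨h1, h2⟩
  -- counting lower bound
  have hcount : ∀ n, 1 ≤ n →
      subwordComplexity x n ≤ 2 ^ (maxFactorComplexity D x n + 1) := by
    intro n hn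
    have hprog : ∀ u, u ∈ KEnt.Factors x n →
        ∃ p : List Bool, p.length = kolmComplexity D u ∧ D p = some u := by
      intro u hu
      have hne : {b : ℕ | ∃ p : List Bool, p.length = b ∧ D p = some u}.Nonempty := by
        obtain ⟨p, hDp, _⟩ := hc₁ n hn u hu
        exact ⟨p.length, p, rfl, hDp⟩
      obtain ⟨p, hp1, hp2⟩ := Nat.sInf_mem hne
      exact ⟨p, hp1, hp2⟩
    choose φ hφ1 hφ2 using hprog
    set F : List A → ℕ := fun u =>
      if h : u ∈ KEnt.Factors x n then KEnt.bitsToNat (φ u h ++ [true]) else 0 with hFdef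
    have hmaps : ∀ u ∈ KEnt.Factors x n,
        F u ∈ Set.Iio (2 ^ (maxFactorComplexity D x n + 1)) := by
      intro u hu
      rw [hFdef]
      simp only [dif_pos hu, Set.mem_Iio]
      have h1 := KEnt.bitsToNat_append_true_lt (φ u hu)
      have h3 : (φ u hu).length ≤ maxFactorComplexity D x n := by
        rw [hφ1 u hu]; exact hKmax n hn u hu
      exact lt_of_lt_of_le h1 (Nat.pow_le_pow_right (by norm_num) (by omega))
    have hinj : Set.InjOn F (KEnt.Factors x n) := by
      intro u hu v hv h
      rw [hFdef] at h
      simp only [dif_pos hu, dif_pos hv] at h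
      have hφeq := KEnt.bitsToNat_append_true_inj h
      have h2 : D (φ u hu) = D (φ v hv) := by rw [hφeq]
      rw [hφ2 u hu, hφ2 v hv] at h2
      exact Option.some.inj h2
    have hIio : (Set.Iio (2 ^ (maxFactorComplexity D x n + 1))).ncard =
        2 ^ (maxFactorComplexity D x n + 1) := by
      have he : Set.Iio (2 ^ (maxFactorComplexity D x n + 1)) =
          ↑(Finset.range (2 ^ (maxFactorComplexity D x n + 1))) := by
        ext a; simp
      rw [he, Set.ncard_coe_finset, Finset.card_range]
    have := Set.ncard_le_ncard_of_injOn F hmaps hinj (Set.finite_Iio _)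
    rw [hIio] at this
    rw [KEnt.subword_eq]
    exact this
  -- Step A : f n ≤ maxK n + 1
  have hA : ∀ n : ℕ, 1 ≤ n → f n ≤ (maxFactorComplexity D x n : ℝ) + 1 := by
    intro n hn
    have hcast : (subwordComplexity x n : ℝ) ≤
        (2 : ℝ) ^ (maxFactorComplexity D x n + 1) := by
      exact_mod_cast hcount n hn
    have hlogb : f n ≤ Real.logb 2 ((2:ℝ) ^ (maxFactorComplexity D x n + 1)) := by
      rw [hfdef]
      exact (Real.logb_le_logb (by norm_num) (hPpos n) (by positivity)).mpr hcast
    rw [Real.logb_pow, Real.logb_self_eq_one (by norm_num : (1:ℝ) < 2)] at hlogb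
    push_cast at hlogb
    linarith
  -- Step C : size bound
  have hC : ∀ m : ℕ, ((subwordComplexity x m).size : ℝ) ≤ f m + 1 := by
    intro m
    have h1 : 1 ≤ (subwordComplexity x m).size := Nat.size_pos.mpr (hP1 m)
    have h2 : 2 ^ ((subwordComplexity x m).size - 1) ≤ subwordComplexity x m := by
      by_contra hcon
      push_neg at hcon
      have := Nat.size_le.mpr hcon
      omega
    have hcast : (2:ℝ) ^ ((subwordComplexity x m).size - 1 : ℕ) ≤
        (subwordComplexity x m : ℝ) := by exact_mod_cast h2
    have h3 : Real.logb 2 ((2:ℝ) ^ ((subwordComplexity x m).size - 1 : ℕ)) ≤ f m := by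
      rw [hfdef]
      exact (Real.logb_le_logb (by norm_num) (by positivity) (hPpos m)).mpr hcast
    rw [Real.logb_pow, Real.logb_self_eq_one (by norm_num : (1:ℝ) < 2), mul_one] at h3
    rw [Nat.cast_sub h1] at h3
    push_cast at h3 ⊢
    linarith
  -- final : tendsto via order
  rw [tendsto_order]
  constructor
  · -- lower
    intro b hb
    have hlim : Tendsto (fun n : ℕ => f n / n - 1 / n) atTop (nhds E) := by
      have := hfE.sub tendsto_one_div_atTop_nhds_zero_nat
      simpa using this
    filter_upwards [hlim.eventually_const_lt hb, eventually_ge_atTop 1] with n h1 h2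
    have hnpos : (0:ℝ) < n := by exact_mod_cast h2
    have hAn := hA n h2
    have : f n / n - 1 / n ≤ (maxFactorComplexity D x n : ℝ) / n := by
      rw [div_sub_div_same]
      exact div_le_div_of_nonneg_right (by linarith) hnpos.le
    linarith
  · -- upper
    intro b hb
    set δ : ℝ := (b - E) / 4 with hδdef
    have hδ : 0 < δ := by rw [hδdef]; linarith
    -- choose m
    have hev1 : ∀ᶠ m : ℕ in atTop, f m / m < E + δ :=
      hfE.eventually_lt_const (by linarith)
    have hev2 : ∀ᶠ m : ℕ in atTop, (1:ℝ) / m < δ :=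
      tendsto_one_div_atTop_nhds_zero_nat.eventually_lt_const hδ
    obtain ⟨m, ⟨hm1, hm2⟩, hm3⟩ := ((hev1.and hev2).and (eventually_ge_atTop 1)).exists
    obtain ⟨c, hc⟩ := key m hm3
    have hmR : (0:ℝ) < m := by exact_mod_cast hm3
    set s : ℝ := ((subwordComplexity x m).size : ℝ) with hsdef
    have hs0 : 0 ≤ s := by rw [hsdef]; positivity
    have hsm : s / m < E + 2 * δ := by
      have := hC m
      rw [← hsdef] at this
      have h4 : s / m ≤ (f m + 1) / m := div_le_div_of_nonneg_right this hmR.le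
      have h5 : (f m + 1) / m = f m / m + 1 / m := by ring
      rw [h5] at h4
      linarith
    have hev3 : ∀ᶠ n : ℕ in atTop, ((c : ℝ) + s) / n < δ := by
      have htend : Tendsto (fun n : ℕ => ((c : ℝ) + s) / n) atTop (nhds 0) := by
        have := tendsto_one_div_atTop_nhds_zero_nat.const_mul ((c : ℝ) + s)
        simpa [div_eq_mul_inv, mul_comm, mul_assoc, one_mul] using this
      exact htend.eventually_lt_const hδ
    filter_upwards [hev3, eventually_ge_atTop 1] with n h3 h4
    have hnR : (0:ℝ) < n := by exact_mod_cast h4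
    -- natural bound
    have hnat := hmaxle m hm3 c hc n h4
    have hstep1 : (maxFactorComplexity D x n : ℝ) ≤
        (c : ℝ) + (((n : ℝ) + m) / m) * s := by
      have hd1 : ((((n + m - 1) / m : ℕ)) : ℝ) ≤ ((n + m - 1 : ℕ) : ℝ) / (m : ℝ) :=
        Nat.cast_div_le
      have hd2 : ((n + m - 1 : ℕ) : ℝ) ≤ (n : ℝ) + m := by
        have : (n + m - 1 : ℕ) ≤ n + m := by omega
        exact_mod_cast le_trans this (le_refl _)
      have hd3 : ((((n + m - 1) / m : ℕ)) : ℝ) ≤ ((n : ℝ) + m) / m := by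
        refine le_trans hd1 ?_
        exact div_le_div_of_nonneg_right hd2 hmR.le
      calc (maxFactorComplexity D x n : ℝ)
          ≤ ((c + ((n + m - 1) / m) * (subwordComplexity x m).size : ℕ) : ℝ) := by
            exact_mod_cast hnat
        _ = (c : ℝ) + ((((n + m - 1) / m : ℕ)) : ℝ) * s := by push_cast [hsdef]; ring
        _ ≤ (c : ℝ) + (((n : ℝ) + m) / m) * s := by
            have := mul_le_mul_of_nonneg_right hd3 hs0
            linarith
    have hstep2 : (maxFactorComplexity D x n : ℝ) / n ≤
        (((c : ℝ) + s) / n) + s / m := by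
      have hdiv : (maxFactorComplexity D x n : ℝ) / n ≤
          ((c : ℝ) + (((n : ℝ) + m) / m) * s) / n :=
        div_le_div_of_nonneg_right hstep1 hnR.le
      have heq : ((c : ℝ) + (((n : ℝ) + m) / m) * s) / n =
          (((c : ℝ) + s) / n) + s / m := by
        field_simp
        ring
      linarith [hdiv, heq ▸ hdiv]
    have : (maxFactorComplexity D x n : ℝ) / n < δ + (E + 2 * δ) := by
      linarith
    rw [hδdef] at this
    linarith
end

section
/- The aperiodicity measure of any sequence over a k-letter alphabet is at most 1 − 1/(2k). -/
open Filter

/-- The Besicovitch distance between the sequence `x` and its shift by `m`,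
i.e. `liminf (1/n) · #{i < n : x i ≠ x (i+m)}`. -/
noncomputable def besicovitchShiftDist {A : Type*} [DecidableEq A]
    (x : ℕ → A) (m : ℕ) : ℝ :=
  liminf (fun n : ℕ =>
    (((Finset.range n).filter (fun i => x i ≠ x (i + m))).card : ℝ) / (n : ℝ)) atTop

/-- The aperiodicity measure of `x`:
`AM(x) = inf { d_B(x, L^m x) : m ≥ 1 }`. -/
noncomputable def aperiodicityMeasure {A : Type*} [DecidableEq A] (x : ℕ → A) : ℝ :=
  sInf {r : ℝ | ∃ m : ℕ, 1 ≤ m ∧ r = besicovitchShiftDist x m}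


section Aux
open Finset Topology


lemma blockIneq {A : Type*} [DecidableEq A] [Fintype A] (y : ℕ → A) (L : ℕ) :
    L ^ 2 ≤ Fintype.card A *
      (2 * ∑ m ∈ Finset.Icc 1 (L - 1),
        ((Finset.range (L - m)).filter fun i => y i = y (i + m)).card + L) := by
  classical
  set nb : A → ℕ := fun c => ((Finset.range L).filter fun i => y i = c).card with hnb
  have hsum : ∑ c ∈ Finset.univ, nb c = L := by
    rw [← Finset.card_range L]
    exact (Finset.card_eq_sum_card_fiberwise (fun i _ => Finset.mem_univ (y i))).symm
  -- S : equal ordered pairs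
  set P : Finset (ℕ × ℕ) :=
    (Finset.range L ×ˢ Finset.range L).filter fun p => y p.1 = y p.2 with hP
  have hPcard : P.card = ∑ c ∈ Finset.univ, nb c ^ 2 := by
    rw [Finset.card_eq_sum_card_fiberwise (f := fun p => y p.1) (t := Finset.univ)
      (fun p _ => Finset.mem_univ _)]
    refine Finset.sum_congr rfl fun c _ => ?_
    have : P.filter (fun p => y p.1 = c) =
        ((Finset.range L).filter fun i => y i = c) ×ˢ
        ((Finset.range L).filter fun i => y i = c) := by
      ext p
      simp only [hP, Finset.mem_filter, Finset.mem_product]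
      constructor
      · rintro ⟨⟨⟨h1, h2⟩, h3⟩, h4⟩
        exact ⟨⟨h1, h4⟩, ⟨h2, h3 ▸ h4⟩⟩
      · rintro ⟨⟨h1, h4⟩, ⟨h2, h5⟩⟩
        exact ⟨⟨⟨h1, h2⟩, h4.trans h5.symm⟩, h4⟩
    rw [this, Finset.card_product, sq]
  have hCS : (L:ℕ) ^ 2 ≤ Fintype.card A * P.card := by
    rw [hPcard, ← hsum, ← Finset.card_univ]
    exact sq_sum_le_card_mul_sum_sq
  -- cover P by three sets
  set U1 : Finset (ℕ × ℕ) := (Finset.Icc 1 (L-1)).biUnion fun m =>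
    (((Finset.range (L - m)).filter fun i => y i = y (i + m)).image fun i => (i, i + m))
  set U3 : Finset (ℕ × ℕ) := (Finset.Icc 1 (L-1)).biUnion fun m =>
    (((Finset.range (L - m)).filter fun i => y i = y (i + m)).image fun i => (i + m, i))
  set U2 : Finset (ℕ × ℕ) := (Finset.range L).image fun i => (i, i)
  have hsub : P ⊆ U1 ∪ U2 ∪ U3 := by
    intro p hp
    simp only [hP, Finset.mem_filter, Finset.mem_product, Finset.mem_range] at hp
    obtain ⟨⟨h1, h2⟩, h3⟩ := hp
    rcases lt_trichotomy p.1 p.2 with h | h | h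
    · apply Finset.mem_union_left; apply Finset.mem_union_left
      refine Finset.mem_biUnion.2 ⟨p.2 - p.1, ?_, ?_⟩
      · simp only [Finset.mem_Icc]; omega
      · refine Finset.mem_image.2 ⟨p.1, ?_, ?_⟩
        · simp only [Finset.mem_filter, Finset.mem_range]
          constructor
          · omega
          · have : p.1 + (p.2 - p.1) = p.2 := by omega
            rw [this]; exact h3
        · have : p.1 + (p.2 - p.1) = p.2 := by omega
          rw [this]
    · apply Finset.mem_union_left; apply Finset.mem_union_right
      exact Finset.mem_image.2 ⟨p.1, Finset.mem_range.2 h1, Prod.ext rfl h⟩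
    · apply Finset.mem_union_right
      refine Finset.mem_biUnion.2 ⟨p.1 - p.2, ?_, ?_⟩
      · simp only [Finset.mem_Icc]; omega
      · refine Finset.mem_image.2 ⟨p.2, ?_, ?_⟩
        · simp only [Finset.mem_filter, Finset.mem_range]
          constructor
          · omega
          · have : p.2 + (p.1 - p.2) = p.1 := by omega
            rw [this]; exact h3.symm
        · have : p.2 + (p.1 - p.2) = p.1 := by omega
          rw [this]
  have hU1 : U1.card ≤ ∑ m ∈ Finset.Icc 1 (L-1),
      ((Finset.range (L - m)).filter fun i => y i = y (i + m)).card :=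
    (Finset.card_biUnion_le).trans (Finset.sum_le_sum fun m _ => Finset.card_image_le)
  have hU3 : U3.card ≤ ∑ m ∈ Finset.Icc 1 (L-1),
      ((Finset.range (L - m)).filter fun i => y i = y (i + m)).card :=
    (Finset.card_biUnion_le).trans (Finset.sum_le_sum fun m _ => Finset.card_image_le)
  have hU2 : U2.card ≤ L := Finset.card_image_le.trans (by simp)
  have hPle : P.card ≤ 2 * ∑ m ∈ Finset.Icc 1 (L-1),
      ((Finset.range (L - m)).filter fun i => y i = y (i + m)).card + L := by
    calc P.card ≤ (U1 ∪ U2 ∪ U3).card := Finset.card_le_card hsub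
    _ ≤ U1.card + U2.card + U3.card :=
        (Finset.card_union_le _ _).trans (by gcongr <;> exact Finset.card_union_le _ _)
    _ ≤ _ := by omega
  calc L ^ 2 ≤ Fintype.card A * P.card := hCS
  _ ≤ _ := Nat.mul_le_mul_left _ hPle

lemma countIneq {A : Type*} [DecidableEq A] [Fintype A] (x : ℕ → A) (L n : ℕ) (hL : 1 ≤ L) :
    (n / L) * L ^ 2 ≤ Fintype.card A *
      (2 * ∑ m ∈ Finset.Icc 1 (L - 1),
        ((Finset.range n).filter fun i => x i = x (i + m)).card + (n / L) * L) := by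
  classical
  set q := n / L with hq
  set c : ℕ → ℕ → ℕ := fun j m =>
    ((Finset.range (L - m)).filter fun i => x (j * L + i) = x (j * L + i + m)).card with hc
  have hblock : ∀ j, L ^ 2 ≤ Fintype.card A *
      (2 * ∑ m ∈ Finset.Icc 1 (L - 1), c j m + L) := by
    intro j
    have := blockIneq (fun i => x (j * L + i)) L
    simpa [hc, add_assoc] using this
  have hsumblock : q * L ^ 2 ≤ Fintype.card A *
      (2 * ∑ m ∈ Finset.Icc 1 (L - 1), ∑ j ∈ Finset.range q, c j m + q * L) := by
    calc q * L ^ 2 = ∑ _j ∈ Finset.range q, L ^ 2 := by simp [mul_comm]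
    _ ≤ ∑ j ∈ Finset.range q, Fintype.card A * (2 * ∑ m ∈ Finset.Icc 1 (L - 1), c j m + L) :=
        Finset.sum_le_sum fun j _ => hblock j
    _ = Fintype.card A * (2 * ∑ j ∈ Finset.range q, ∑ m ∈ Finset.Icc 1 (L - 1), c j m + q * L) := by
        rw [← Finset.mul_sum]
        congr 1
        rw [Finset.sum_add_distrib, Finset.mul_sum]
        simp [mul_comm]
    _ = _ := by rw [Finset.sum_comm]
  refine hsumblock.trans (Nat.mul_le_mul_left _ (by
    have key : ∀ m ∈ Finset.Icc 1 (L - 1), ∑ j ∈ Finset.range q, c j m ≤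
        ((Finset.range n).filter fun i => x i = x (i + m)).card := by
      intro m hm
      simp only [Finset.mem_Icc] at hm
      set t : ℕ → Finset ℕ := fun j =>
        (((Finset.range (L - m)).filter fun i => x (j * L + i) = x (j * L + i + m)).image
          fun i => j * L + i) with ht
      have hdisj : ∀ j1 ∈ Finset.range q, ∀ j2 ∈ Finset.range q, j1 ≠ j2 →
          Disjoint (t j1) (t j2) := by
        intro j1 _ j2 _ hne
        rw [Finset.disjoint_left]
        intro a ha1 ha2
        simp only [ht, Finset.mem_image, Finset.mem_filter, Finset.mem_range] at ha1 ha2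
        obtain ⟨i1, ⟨hi1, _⟩, he1⟩ := ha1
        obtain ⟨i2, ⟨hi2, _⟩, he2⟩ := ha2
        have e1 : a / L = j1 := by
          rw [← he1, mul_comm, Nat.mul_add_div (by omega)]
          have : i1 / L = 0 := Nat.div_eq_of_lt (by omega)
          omega
        have e2 : a / L = j2 := by
          rw [← he2, mul_comm, Nat.mul_add_div (by omega)]
          have : i2 / L = 0 := Nat.div_eq_of_lt (by omega)
          omega
        omega
      have hcard : ∀ j, (t j).card = c j m := by
        intro j
        rw [ht]
        exact Finset.card_image_of_injective _ (fun a b h => by omega)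
      have hsub : (Finset.range q).biUnion t ⊆
          (Finset.range n).filter fun i => x i = x (i + m) := by
        intro a ha
        simp only [Finset.mem_biUnion, ht, Finset.mem_image, Finset.mem_filter,
          Finset.mem_range] at ha ⊢
        obtain ⟨j, hj, i, ⟨hi, hx⟩, he⟩ := ha
        have hqL : q * L ≤ n := Nat.div_mul_le_self n L
        have h2 : j * L + L ≤ q * L := by
          have := Nat.mul_le_mul_right L (show j + 1 ≤ q by omega)
          rwa [Nat.succ_mul] at this
        constructor
        · omega
        · subst he
          exact hx
      calc ∑ j ∈ Finset.range q, c j m = ∑ j ∈ Finset.range q, (t j).card := by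
            simp [hcard]
      _ = ((Finset.range q).biUnion t).card := (Finset.card_biUnion hdisj).symm
      _ ≤ _ := Finset.card_le_card hsub
    calc 2 * ∑ m ∈ Finset.Icc 1 (L - 1), ∑ j ∈ Finset.range q, c j m + q * L
        ≤ 2 * ∑ m ∈ Finset.Icc 1 (L - 1),
            ((Finset.range n).filter fun i => x i = x (i + m)).card + q * L := by
          have := Finset.sum_le_sum key
          omega
    _ = _ := rfl))

lemma shiftDist_le {A : Type*} [DecidableEq A] [Fintype A] (x : ℕ → A) (L : ℕ)
    (hL : Fintype.card A + 1 ≤ L) :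
    ∃ m : ℕ, 1 ≤ m ∧ besicovitchShiftDist x m ≤
      1 - ((L : ℝ) - Fintype.card A) / (2 * Fintype.card A * ((L : ℝ) - 1)) := by
  classical
  have hk1 : 1 ≤ Fintype.card A := Fintype.card_pos_iff.2 ⟨x 0⟩
  set k := Fintype.card A with hkdef
  set K : ℝ := (k : ℝ) with hK
  have hK1 : (1 : ℝ) ≤ K := by rw [hK]; exact_mod_cast hk1
  have hL2 : 2 ≤ L := by omega
  set M := L - 1 with hM
  have hM1 : 1 ≤ M := by omega
  have hMcast : (M : ℝ) = (L : ℝ) - 1 := by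
    rw [hM]; push_cast [Nat.cast_sub (by omega : 1 ≤ L)]; ring
  have hLK : K ≤ (L : ℝ) - 1 := by
    have : (k : ℝ) ≤ (L : ℝ) - 1 := by
      have : (k + 1 : ℕ) ≤ L := hL
      have := Nat.cast_le (α := ℝ).2 this
      push_cast at this
      linarith
    exact this
  set β : ℝ := ((L : ℝ) - K) / (2 * K * M) with hβ
  have hβ0 : 0 ≤ β := by
    apply div_nonneg
    · linarith
    · positivity
  set a : ℕ → ℕ → ℕ := fun m n => ((Finset.range n).filter fun i => x i = x (i + m)).card
    with ha
  -- per-n pigeonhole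
  have pigeon : ∀ n : ℕ, ∃ m ∈ Finset.Icc 1 M, ((n / L : ℕ) : ℝ) * L * β ≤ a m n := by
    intro n
    set q := n / L with hq
    have hcast : (q : ℝ) * (L : ℝ) ^ 2 ≤ K * (2 * ∑ m ∈ Finset.Icc 1 M, (a m n : ℝ) + q * L) := by
      have := countIneq x L n (by omega)
      have h2 : ((q * L ^ 2 : ℕ) : ℝ) ≤ ((k * (2 * ∑ m ∈ Finset.Icc 1 M, a m n + q * L) : ℕ) : ℝ) := by
        exact_mod_cast this
      push_cast at h2
      convert h2 using 2
    have key : ∑ m ∈ Finset.Icc 1 M, ((q : ℝ) * L * β) ≤ ∑ m ∈ Finset.Icc 1 M, (a m n : ℝ) := by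
      rw [Finset.sum_const, Nat.card_Icc]
      simp only [Nat.add_sub_cancel, nsmul_eq_mul]
      have hβeq : (M : ℝ) * ((q : ℝ) * L * β) = (q : ℝ) * L * ((L : ℝ) - K) / (2 * K) := by
        rw [hβ]
        have hM0 : (M : ℝ) ≠ 0 := by positivity
        field_simp
      rw [hβeq, div_le_iff₀ (by positivity)]
      nlinarith [hcast]
    obtain ⟨m, hm, hle⟩ := Finset.exists_le_of_sum_le (Finset.nonempty_Icc.2 hM1) key
    exact ⟨m, hm, hle⟩
  -- pigeonhole over n
  have freq : ∃ m ∈ Finset.Icc 1 M, ∃ᶠ n in atTop, ((n / L : ℕ) : ℝ) * L * β ≤ a m n := by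
    by_contra hcon
    push_neg at hcon
    have : ∀ᶠ n in atTop, ∀ m ∈ Finset.Icc 1 M, ¬ (((n / L : ℕ) : ℝ) * L * β ≤ a m n) := by
      rw [eventually_all_finset]
      intro m hm
      have := hcon m hm
      exact this.mono fun n hn => not_le.2 hn
    obtain ⟨n, hn⟩ := this.exists
    obtain ⟨m, hm, hle⟩ := pigeon n
    exact hn m hm hle
  obtain ⟨m, hm, hfreq⟩ := freq
  simp only [Finset.mem_Icc] at hm
  refine ⟨m, hm.1, ?_⟩
  -- now bound the liminf
  set f : ℕ → ℝ := fun n =>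
    (((Finset.range n).filter (fun i => x i ≠ x (i + m))).card : ℝ) / (n : ℝ) with hf
  have hf0 : ∀ n, 0 ≤ f n := fun n => by positivity
  have hbdd : IsBoundedUnder (· ≥ ·) atTop f :=
    Filter.isBoundedUnder_of ⟨0, fun n => hf0 n⟩
  have main : ∀ ε : ℝ, 0 < ε → besicovitchShiftDist x m ≤ (1 - β) + ε := by
    intro ε hε
    obtain ⟨N, hN⟩ := exists_nat_gt ((L : ℝ) * β / ε)
    have hfreq2 : ∃ᶠ n in atTop, f n ≤ (1 - β) + ε := by
      refine (hfreq.and_eventually (eventually_ge_atTop (max N 1))).mono ?_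
      rintro n ⟨hle, hn⟩
      have hn1 : 1 ≤ n := le_trans (le_max_right N 1) hn
      have hnN : (N : ℝ) ≤ n := by exact_mod_cast le_trans (le_max_left N 1) hn
      have hn0 : (0 : ℝ) < n := by exact_mod_cast hn1
      -- f n = 1 - a m n / n
      have hcards : (((Finset.range n).filter (fun i => x i ≠ x (i + m))).card : ℝ)
          = (n : ℝ) - a m n := by
        have := Finset.card_filter_add_card_filter_not
          (s := Finset.range n) (p := fun i => x i = x (i + m))
        simp only [Finset.card_range] at this
        have h2 : a m n + ((Finset.range n).filter (fun i => ¬ x i = x (i + m))).card = n := this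
        have h3 : ((Finset.range n).filter (fun i => x i ≠ x (i + m))).card
            = ((Finset.range n).filter (fun i => ¬ x i = x (i + m))).card := rfl
        rw [h3]
        have h4 : (a m n : ℝ) + ((Finset.range n).filter (fun i => ¬ x i = x (i + m))).card
            = (n : ℝ) := by exact_mod_cast h2
        linarith
      have hqL : (n : ℝ) - L ≤ ((n / L : ℕ) : ℝ) * L := by
        have hnat : n < n / L * L + L := by
          have h5 := Nat.div_add_mod n L
          have hmod : n % L < L := Nat.mod_lt _ (by omega)
          rw [mul_comm]
          omega
        have := Nat.cast_lt (α := ℝ).2 hnat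
        push_cast at this
        linarith
      have hBn : ((n : ℝ) - L) * β ≤ a m n := by
        calc ((n : ℝ) - L) * β ≤ ((n / L : ℕ) : ℝ) * L * β :=
              mul_le_mul_of_nonneg_right hqL hβ0
        _ ≤ a m n := hle
      have hfn : f n = 1 - (a m n : ℝ) / n := by
        rw [hf]
        simp only
        rw [hcards]
        field_simp
      rw [hfn]
      have hdiv : ((n : ℝ) - L) * β / n ≤ (a m n : ℝ) / n :=
        div_le_div_of_nonneg_right hBn hn0.le
      have heq : 1 - ((n : ℝ) - L) * β / n = 1 - β + (L : ℝ) * β / n := by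
        field_simp
        ring
      have hLβn : (L : ℝ) * β / n ≤ ε := by
        rw [div_le_iff₀ hn0]
        have h6 : (L : ℝ) * β / ε < n := lt_of_lt_of_le hN hnN
        rw [div_lt_iff₀ hε] at h6
        linarith
      linarith
    exact liminf_le_of_frequently_le hfreq2 hbdd
  have hfinal : besicovitchShiftDist x m ≤ 1 - β :=
    le_of_forall_pos_le_add main
  refine hfinal.trans_eq ?_
  rw [hβ, hMcast]

/-- The aperiodicity measure of any sequence over a `k`-letter alphabet is at
most `1 - 1/(2k)`. -/
theorem aperiodicityMeasure_le {A : Type*} [DecidableEq A] [Fintype A]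
    (k : ℕ) (hk : Fintype.card A = k) (x : ℕ → A) :
    aperiodicityMeasure x ≤ 1 - 1 / (2 * (k : ℝ)) := by
  classical
  subst hk
  set k := Fintype.card A with hkdef
  have hk1 : 1 ≤ k := Fintype.card_pos_iff.2 ⟨x 0⟩
  set K : ℝ := (k : ℝ) with hK
  have hK1 : (1 : ℝ) ≤ K := by rw [hK]; exact_mod_cast hk1
  -- the set is bounded below by 0
  have hbddS : BddBelow {r : ℝ | ∃ m : ℕ, 1 ≤ m ∧ r = besicovitchShiftDist x m} := by
    refine ⟨0, fun r hr => ?_⟩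
    obtain ⟨m, _, rfl⟩ := hr
    set f : ℕ → ℝ := fun n =>
      (((Finset.range n).filter (fun i => x i ≠ x (i + m))).card : ℝ) / (n : ℝ) with hf
    have hf0 : ∀ n, 0 ≤ f n := fun n => by positivity
    have hf1 : ∀ n, f n ≤ 1 := by
      intro n
      rw [hf]
      rcases Nat.eq_zero_or_pos n with h | h
      · simp [h]
      · rw [div_le_one (by exact_mod_cast h)]
        exact_mod_cast (Finset.card_filter_le _ _).trans (Finset.card_range n).le
    refine le_liminf_of_le ?_ (Eventually.of_forall hf0)
    exact (Filter.isBoundedUnder_of ⟨1, fun n => hf1 n⟩).isCoboundedUnder_ge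
  -- aperiodicityMeasure ≤ 1 - (L - K)/(2K(L-1)) for all L ≥ k + 1
  have hAM : ∀ L : ℕ, k + 1 ≤ L →
      aperiodicityMeasure x ≤ 1 - ((L : ℝ) - K) / (2 * K * ((L : ℝ) - 1)) := by
    intro L hL
    obtain ⟨m, hm, hle⟩ := shiftDist_le x L hL
    exact (csInf_le hbddS ⟨m, hm, rfl⟩).trans hle
  -- take the limit L → ∞
  have hlim : Tendsto (fun L : ℕ => 1 - ((L : ℝ) - K) / (2 * K * ((L : ℝ) - 1))) atTop
      (𝓝 (1 - 1 / (2 * K))) := by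
    have h0 : Tendsto (fun L : ℕ => (K - 1) / ((L : ℝ) - 1)) atTop (𝓝 0) :=
      Tendsto.div_atTop tendsto_const_nhds
        (tendsto_atTop_add_const_right atTop (-1) tendsto_natCast_atTop_atTop)
    have h1 : Tendsto (fun L : ℕ => 1 - (1 - (K - 1) / ((L : ℝ) - 1)) * (1 / (2 * K))) atTop
        (𝓝 (1 - 1 / (2 * K))) := by
      have h2 : Tendsto (fun L : ℕ => (1 - (K - 1) / ((L : ℝ) - 1)) * (1 / (2 * K))) atTop
          (𝓝 ((1 - 0) * (1 / (2 * K)))) :=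
        ((tendsto_const_nhds.sub h0).mul tendsto_const_nhds)
      have h3 := (tendsto_const_nhds (x := (1:ℝ))).sub h2
      simpa using h3
    refine h1.congr' ?_
    filter_upwards [eventually_ge_atTop 2] with L hL2
    have hL1 : (1 : ℝ) ≤ (L : ℝ) - 1 := by
      have : (2 : ℝ) ≤ L := by exact_mod_cast hL2
      linarith
    have hne : (L : ℝ) - 1 ≠ 0 := by linarith
    have hKne : K ≠ 0 := by linarith
    field_simp
    ring
  exact ge_of_tendsto hlim (eventually_atTop.2 ⟨k + 1, hAM⟩)

end Aux
end
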